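/- arXiv:0910.0218 — 6 statements merged into one kernel-verified Lean document; each statement's English description precedes it below -/
import Mathlib

section
/- If f and g are orientation-preserving homeomorphisms of the circle S^1, each having at least one fixed point, and Fix(f) ∩ Fix(g) = ∅, then the group generated by f and g contains a non-abelian free subgroup. -/
open Function Set

notation "S¹" => AddCircle (1:ℝ)

open Pointwise Filter

/-- The group structure on self-homeomorphisms, with `(f * g) x = f (g x)`. -/
instance homeoGroup (X : Type*) [TopologicalSpace X] : Group (X ≃ₜ X) where
  mul f g := g.trans f
  one := Homeomorph.refl X
  inv := Homeomorph.symm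
  mul_assoc a b c := Homeomorph.ext fun _ => rfl
  one_mul a := Homeomorph.ext fun _ => rfl
  mul_one a := Homeomorph.ext fun _ => rfl
  inv_mul_cancel a := Homeomorph.ext fun x => a.symm_apply_apply x

/-- `F` is a lift of the circle homeomorphism `f` through the projection `ℝ → ℝ/ℤ`. -/
def IsLift (f : S¹ ≃ₜ S¹) (F : CircleDeg1Lift) : Prop :=
  ∀ x : ℝ, f (x : S¹) = ((F x : ℝ) : S¹)

/-- A circle homeomorphism is orientation-preserving iff it admits a monotone degree-one
lift to the real line. -/
def OrientationPreserving (f : S¹ ≃ₜ S¹) : Prop := ∃ F : CircleDeg1Lift, IsLift f F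

open Classical in
/-- Poincaré's rotation number of a circle homeomorphism, as an element of `ℝ/ℤ`;
the translation number of any lift, reduced mod 1. -/
noncomputable def rot (f : S¹ ≃ₜ S¹) : S¹ :=
  if h : OrientationPreserving f then ((h.choose.translationNumber : ℝ) : S¹) else 0

/-- The fixed-point set of a circle homeomorphism. -/
def FixSet (f : S¹ ≃ₜ S¹) : Set S¹ := {s | f s = s}

/-- A subgroup has a non-abelian free subgroup iff the free group of rank 2 embeds into it. -/
def HasFreeSubgroup {Γ : Type*} [Group Γ] (G : Subgroup Γ) : Prop :=
  ∃ φ : FreeGroup (Fin 2) →* Γ, Function.Injective φ ∧ ∀ w, φ w ∈ G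

namespace FreeSubAux

/-! ### Generalities on `ℝ ≃o ℝ` commuting with integer translations -/

lemma contPhi (Φ : ℝ ≃o ℝ) : Continuous Φ := (Φ.toHomeomorph).continuous

lemma perZ {Φ : ℝ → ℝ} (hper : ∀ x, Φ (x+1) = Φ x + 1) : ∀ (k : ℤ) (x : ℝ), Φ (x + k) = Φ x + k := by
  have hnat : ∀ (n : ℕ) (x : ℝ), Φ (x + n) = Φ x + n := by
    intro n
    induction n with
    | zero => simp
    | succ n ih => intro x; push_cast; rw [← add_assoc, hper, ih]; ring
  intro k x
  cases k with
  | ofNat n => exact_mod_cast hnat n x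
  | negSucc n =>
    have h1 := hnat (n+1) (x + Int.negSucc n)
    have h2 : (x + (Int.negSucc n : ℤ)) + ((n+1:ℕ):ℝ) = x := by
      rw [Int.negSucc_eq]; push_cast; ring
    rw [h2] at h1
    rw [h1, Int.negSucc_eq]; push_cast; ring

lemma iter_perZ {Φ : ℝ → ℝ} (hper : ∀ x, Φ (x+1) = Φ x + 1) (n : ℕ) (k : ℤ) (x : ℝ) :
    Φ^[n] (x + k) = Φ^[n] x + k := by
  induction n generalizing x with
  | zero => simp
  | succ n ih => rw [Function.iterate_succ_apply, perZ hper k x, ih, Function.iterate_succ_apply]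

lemma symm_per {Φ : ℝ ≃o ℝ} (hper : ∀ x, Φ (x+1) = Φ x + 1) (x : ℝ) :
    Φ.symm (x + 1) = Φ.symm x + 1 := by
  apply Φ.injective
  rw [Φ.apply_symm_apply, hper, Φ.apply_symm_apply]

lemma setperZ {U : Set ℝ} (hUper : ∀ x : ℝ, x ∈ U ↔ x + 1 ∈ U) :
    ∀ (k : ℤ) (x : ℝ), x + k ∈ U ↔ x ∈ U := by
  have hnat : ∀ (n : ℕ) (x : ℝ), x + n ∈ U ↔ x ∈ U := by
    intro n
    induction n with
    | zero => simp
    | succ n ih =>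
      intro x
      have : x + ((n+1 : ℕ):ℝ) = (x + n) + 1 := by push_cast; ring
      rw [this, ← hUper, ih]
  intro k x
  cases k with
  | ofNat n => exact_mod_cast hnat n x
  | negSucc n =>
    have h1 := hnat (n+1) (x + Int.negSucc n)
    have h2 : (x + (Int.negSucc n : ℤ)) + ((n+1:ℕ):ℝ) = x := by
      rw [Int.negSucc_eq]; push_cast; ring
    rw [h2] at h1
    exact h1.symm

/-! ### The local trapping lemma -/

lemma local_trap (Φ : ℝ ≃o ℝ) (hper : ∀ x, Φ (x+1) = Φ x + 1)
    (p0 : ℝ) (hp0 : Φ p0 = p0) (U : Set ℝ) (hU : IsOpen U)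
    (hPU : ∀ z : ℝ, Φ z = z → z ∈ U) (x : ℝ) (hx : Φ x ≠ x) :
    ∃ O : Set ℝ, IsOpen O ∧ x ∈ O ∧ ∃ N : ℕ, ∀ n, N ≤ n → ∀ y ∈ O, Φ^[n] y ∈ U := by
  set P : Set ℝ := {z | Φ z = z} with hPdef
  have hPc : IsClosed P := isClosed_eq (contPhi Φ) continuous_id
  have hPper : ∀ z ∈ P, ∀ k : ℤ, z + k ∈ P := by
    intro z hz k
    show Φ (z + k) = z + k
    rw [perZ hper k z, hz]
  -- fixed points above and below x
  have hSvne : (P ∩ Ici x).Nonempty := by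
    refine ⟨p0 + ((⌈x - p0⌉ + 1 : ℤ) : ℝ), hPper p0 hp0 _, ?_⟩
    have := Int.le_ceil (x - p0)
    simp only [mem_Ici]
    push_cast
    linarith
  have hSune : (P ∩ Iic x).Nonempty := by
    refine ⟨p0 + ((⌊x - p0⌋ - 1 : ℤ) : ℝ), hPper p0 hp0 _, ?_⟩
    have := Int.floor_le (x - p0)
    simp only [mem_Iic]
    push_cast
    linarith
  set v := sInf (P ∩ Ici x) with hvdef
  set u := sSup (P ∩ Iic x) with hudef
  have hv : v ∈ P ∩ Ici x :=
    (hPc.inter isClosed_Ici).csInf_mem hSvne ⟨x, fun y hy => hy.2⟩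
  have hu : u ∈ P ∩ Iic x :=
    (hPc.inter isClosed_Iic).csSup_mem hSune ⟨x, fun y hy => hy.2⟩
  have hxP : x ∉ P := hx
  have hvx : x < v := lt_of_le_of_ne hv.2 (by intro h; rw [← h] at hv; exact hxP hv.1)
  have hux : u < x := lt_of_le_of_ne hu.2 (by intro h; rw [h] at hu; exact hxP hu.1)
  have hvmin : ∀ z ∈ P, x ≤ z → v ≤ z := by
    intro z hz hxz
    exact csInf_le ⟨x, fun y hy => hy.2⟩ ⟨hz, hxz⟩
  have humax : ∀ z ∈ P, z ≤ x → z ≤ u := by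
    intro z hz hxz
    exact le_csSup ⟨x, fun y hy => hy.2⟩ ⟨hz, hxz⟩
  have hnofix : ∀ z, u < z → z < v → Φ z ≠ z := by
    intro z h1 h2 hz
    rcases le_total z x with h | h
    · exact absurd (humax z hz h) (not_le.2 h1)
    · exact absurd (hvmin z hz h) (not_le.2 h2)
  have hPhiv : Φ v = v := hv.1
  have hPhiu : Φ u = u := hu.1
  -- sign is constant on (u,v); we split on the sign at x
  rcases lt_or_gt_of_ne hx with hlt | hgt
  · -- Φ x < x : orbits decrease to u
    have hsg : ∀ z, u < z → z < v → Φ z < z := by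
      intro z h1 h2
      rcases lt_or_gt_of_ne (hnofix z h1 h2) with h | h
      · exact h
      · exfalso
        have hc : Continuous fun t => Φ t - t := (contPhi Φ).sub continuous_id
        have h0 : (0:ℝ) ∈ uIcc (Φ x - x) (Φ z - z) := by
          rw [Set.mem_uIcc]; left; constructor <;> linarith
        obtain ⟨w, hw, hw0⟩ := intermediate_value_uIcc (a := x) (b := z) hc.continuousOn h0
        have hw1 : u < w ∧ w < v := by
          rw [Set.uIcc_eq_union] at hw
          rcases hw with hw | hw
          · exact ⟨lt_of_lt_of_le hux hw.1, lt_of_le_of_lt hw.2 h2⟩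
          · exact ⟨lt_of_lt_of_le h1 hw.1, lt_of_le_of_lt hw.2 hvx⟩
        have hw0' : Φ w - w = 0 := hw0
        exact hnofix w hw1.1 hw1.2 (by linarith)
    have hinv : ∀ y, u < y → y < v → u < Φ y ∧ Φ y < v := by
      intro y h1 h2
      refine ⟨?_, lt_trans (hsg y h1 h2) h2⟩
      have := Φ.strictMono h1
      rwa [hPhiu] at this
    have hiter : ∀ y, u < y → y < v → ∀ n : ℕ, u < Φ^[n] y ∧ Φ^[n] y < v := by
      intro y h1 h2 n
      induction n with
      | zero => exact ⟨h1, h2⟩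
      | succ n ih =>
        rw [Function.iterate_succ_apply']
        exact hinv _ ih.1 ih.2
    set x1 := (x + v)/2 with hx1def
    have hx1a : x < x1 := by rw [hx1def]; linarith
    have hx1b : x1 < v := by rw [hx1def]; linarith
    have hux1 : u < x1 := lt_trans hux hx1a
    set c := fun n => Φ^[n] x1 with hcdef
    have hcb : ∀ n, u < c n ∧ c n < v := hiter x1 hux1 hx1b
    have hcanti : Antitone c := by
      refine antitone_nat_of_succ_le fun n => ?_
      rw [hcdef]
      simp only [Function.iterate_succ_apply']
      exact (hsg _ (hcb n).1 (hcb n).2).le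
    have hbdd : BddBelow (Set.range c) := ⟨u, by rintro _ ⟨n, rfl⟩; exact (hcb n).1.le⟩
    set L := ⨅ n, c n with hLdef
    have hL : Tendsto c atTop (nhds L) := tendsto_atTop_ciInf hcanti hbdd
    have hLge : u ≤ L := le_ciInf fun n => (hcb n).1.le
    have hLlt : L < v := lt_of_le_of_lt (ciInf_le hbdd 0) (hcb 0).2
    have hLfix : Φ L = L := by
      have h1 : Tendsto (fun n => Φ (c n)) atTop (nhds (Φ L)) :=
        ((contPhi Φ).tendsto L).comp hL
      have h2 : (fun n => Φ (c n)) = fun n => c (n+1) := by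
        funext n; rw [hcdef]; exact (Function.iterate_succ_apply' Φ n x1).symm
      have h3 : Tendsto (fun n => c (n+1)) atTop (nhds L) :=
        hL.comp (tendsto_add_atTop_nat 1)
      rw [h2] at h1
      exact tendsto_nhds_unique h1 h3
    have hLu : L = u := by
      rcases eq_or_lt_of_le hLge with h | h
      · exact h.symm
      · exact absurd hLfix (hnofix L h hLlt)
    rw [hLu] at hL
    obtain ⟨ε, hε, hball⟩ : ∃ ε > 0, Set.Ioo (u-ε) (u+ε) ⊆ U := by
      obtain ⟨ε, hε, hb⟩ := Metric.isOpen_iff.1 hU u (hPU u hPhiu)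
      exact ⟨ε, hε, by rwa [Real.ball_eq_Ioo] at hb⟩
    obtain ⟨N, hN⟩ : ∃ N, c N < u + ε :=
      (hL.eventually (eventually_lt_nhds (by linarith))).exists
    refine ⟨Ioo u x1, isOpen_Ioo, ⟨hux, hx1a⟩, N, ?_⟩
    intro n hn y hy
    have h1 : Φ^[n] y ≤ c n := (Φ.monotone.iterate n) hy.2.le
    have h2 : u < Φ^[n] y := (hiter y hy.1 (lt_trans hy.2 hx1b) n).1
    have h3 : c n ≤ c N := hcanti hn
    exact hball ⟨by linarith, by linarith⟩
  · -- x < Φ x : orbits increase to v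
    have hsg : ∀ z, u < z → z < v → z < Φ z := by
      intro z h1 h2
      rcases lt_or_gt_of_ne (hnofix z h1 h2) with h | h
      · exfalso
        have hc : Continuous fun t => Φ t - t := (contPhi Φ).sub continuous_id
        have h0 : (0:ℝ) ∈ uIcc (Φ x - x) (Φ z - z) := by
          rw [Set.mem_uIcc]; right; constructor <;> linarith
        obtain ⟨w, hw, hw0⟩ := intermediate_value_uIcc (a := x) (b := z) hc.continuousOn h0
        have hw1 : u < w ∧ w < v := by
          rw [Set.uIcc_eq_union] at hw
          rcases hw with hw | hw
          · exact ⟨lt_of_lt_of_le hux hw.1, lt_of_le_of_lt hw.2 h2⟩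
          · exact ⟨lt_of_lt_of_le h1 hw.1, lt_of_le_of_lt hw.2 hvx⟩
        have hw0' : Φ w - w = 0 := hw0
        exact hnofix w hw1.1 hw1.2 (by linarith)
      · exact h
    have hinv : ∀ y, u < y → y < v → u < Φ y ∧ Φ y < v := by
      intro y h1 h2
      refine ⟨lt_trans h1 (hsg y h1 h2), ?_⟩
      have := Φ.strictMono h2
      rwa [hPhiv] at this
    have hiter : ∀ y, u < y → y < v → ∀ n : ℕ, u < Φ^[n] y ∧ Φ^[n] y < v := by
      intro y h1 h2 n
      induction n with
      | zero => exact ⟨h1, h2⟩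
      | succ n ih =>
        rw [Function.iterate_succ_apply']
        exact hinv _ ih.1 ih.2
    set x0 := (u + x)/2 with hx0def
    have hx0a : u < x0 := by rw [hx0def]; linarith
    have hx0b : x0 < x := by rw [hx0def]; linarith
    have hx0v : x0 < v := lt_trans hx0b hvx
    set c := fun n => Φ^[n] x0 with hcdef
    have hcb : ∀ n, u < c n ∧ c n < v := hiter x0 hx0a hx0v
    have hcmono : Monotone c := by
      refine monotone_nat_of_le_succ fun n => ?_
      rw [hcdef]
      simp only [Function.iterate_succ_apply']
      exact (hsg _ (hcb n).1 (hcb n).2).le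
    have hbdd : BddAbove (Set.range c) := ⟨v, by rintro _ ⟨n, rfl⟩; exact (hcb n).2.le⟩
    set L := ⨆ n, c n with hLdef
    have hL : Tendsto c atTop (nhds L) := tendsto_atTop_ciSup hcmono hbdd
    have hLle : L ≤ v := ciSup_le fun n => (hcb n).2.le
    have hLgt : u < L := lt_of_lt_of_le (hcb 0).1 (le_ciSup hbdd 0)
    have hLfix : Φ L = L := by
      have h1 : Tendsto (fun n => Φ (c n)) atTop (nhds (Φ L)) :=
        ((contPhi Φ).tendsto L).comp hL
      have h2 : (fun n => Φ (c n)) = fun n => c (n+1) := by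
        funext n; rw [hcdef]; exact (Function.iterate_succ_apply' Φ n x0).symm
      have h3 : Tendsto (fun n => c (n+1)) atTop (nhds L) :=
        hL.comp (tendsto_add_atTop_nat 1)
      rw [h2] at h1
      exact tendsto_nhds_unique h1 h3
    have hLv : L = v := by
      rcases eq_or_lt_of_le hLle with h | h
      · exact h
      · exact absurd hLfix (hnofix L hLgt h)
    rw [hLv] at hL
    obtain ⟨ε, hε, hball⟩ : ∃ ε > 0, Set.Ioo (v-ε) (v+ε) ⊆ U := by
      obtain ⟨ε, hε, hb⟩ := Metric.isOpen_iff.1 hU v (hPU v hPhiv)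
      exact ⟨ε, hε, by rwa [Real.ball_eq_Ioo] at hb⟩
    obtain ⟨N, hN⟩ : ∃ N, v - ε < c N :=
      (hL.eventually (eventually_gt_nhds (by linarith))).exists
    refine ⟨Ioo x0 v, isOpen_Ioo, ⟨hx0b, hvx⟩, N, ?_⟩
    intro n hn y hy
    have h1 : c n ≤ Φ^[n] y := (Φ.monotone.iterate n) hy.1.le
    have h2 : Φ^[n] y < v := (hiter y (lt_trans hx0a hy.1) hy.2 n).2
    have h3 : c N ≤ c n := hcmono hn
    exact hball ⟨by linarith, by linarith⟩

lemma real_trap (Φ : ℝ ≃o ℝ) (hper : ∀ x, Φ (x+1) = Φ x + 1)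
    (p0 : ℝ) (hp0 : Φ p0 = p0) (U : Set ℝ) (hU : IsOpen U)
    (hPU : ∀ z : ℝ, Φ z = z → z ∈ U) (hUper : ∀ x : ℝ, x ∈ U ↔ x + 1 ∈ U) :
    ∃ N : ℕ, ∀ n, N ≤ n → ∀ x ∉ U, Φ^[n] x ∈ U := by
  have hUZ := setperZ hUper
  set K : Set ℝ := Icc (0:ℝ) 1 ∩ Uᶜ with hKdef
  have hKc : IsCompact K := isCompact_Icc.inter_right hU.isClosed_compl
  have hch : ∀ z : K, ∃ O N, IsOpen O ∧ (z:ℝ) ∈ O ∧ ∀ n, N ≤ n → ∀ y ∈ O, Φ^[n] y ∈ U := by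
    rintro ⟨z, hz1, hz2⟩
    have hzU : z ∉ U := hz2
    have hzfix : Φ z ≠ z := fun h => hzU (hPU z h)
    obtain ⟨O, hO, hmem, N, hN⟩ := local_trap Φ hper p0 hp0 U hU hPU z hzfix
    exact ⟨O, N, hO, hmem, hN⟩
  choose O N hOopen hOmem hON using hch
  have hcover : K ⊆ ⋃ z : K, O z := by
    intro z hz
    exact mem_iUnion.2 ⟨⟨z, hz⟩, hOmem ⟨z, hz⟩⟩
  obtain ⟨t, ht⟩ := hKc.elim_finite_subcover O hOopen hcover
  refine ⟨t.sup N, ?_⟩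
  intro n hn x hxU
  have hfx : Int.fract x ∉ U := by
    intro h
    have h2 : Int.fract x + (⌊x⌋ : ℝ) = x := Int.fract_add_floor x
    have := (hUZ ⌊x⌋ (Int.fract x)).2 h
    rw [h2] at this
    exact hxU this
  have hfK : Int.fract x ∈ K :=
    ⟨⟨Int.fract_nonneg x, (Int.fract_lt_one x).le⟩, hfx⟩
  obtain ⟨z, hzt, hzO⟩ : ∃ z ∈ t, Int.fract x ∈ O z := by
    have := ht hfK
    simpa using this
  have hNn : N z ≤ n := le_trans (Finset.le_sup hzt) hn
  have hfU : Φ^[n] (Int.fract x) ∈ U := hON z n hNn _ hzO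
  have h2 : Int.fract x + (⌊x⌋ : ℝ) = x := Int.fract_add_floor x
  have h3 : Φ^[n] (Int.fract x + (⌊x⌋:ℝ)) = Φ^[n] (Int.fract x) + (⌊x⌋ : ℝ) :=
    iter_perZ hper n ⌊x⌋ _
  rw [h2] at h3
  rw [h3]
  exact (hUZ ⌊x⌋ _).2 hfU

/-! ### The circle -/

lemma coe_eq_coe_iff (x y : ℝ) : (x : S¹) = (y : S¹) ↔ ∃ k : ℤ, y = x + k := by
  constructor
  · intro h
    have hm := (QuotientAddGroup.eq_iff_sub_mem).1 h.symm
    rw [AddSubgroup.mem_zmultiples_iff] at hm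
    obtain ⟨k, hk⟩ := hm
    rw [zsmul_eq_mul, mul_one] at hk
    exact ⟨k, by linarith⟩
  · rintro ⟨k, rfl⟩
    refine ((QuotientAddGroup.eq_iff_sub_mem).2 ?_).symm
    rw [AddSubgroup.mem_zmultiples_iff]
    exact ⟨k, by rw [zsmul_eq_mul, mul_one]; ring⟩

lemma coe_surj : Function.Surjective ((↑) : ℝ → S¹) :=
  QuotientAddGroup.mk'_surjective _

lemma coe_add_int (x : ℝ) (k : ℤ) : ((x + k : ℝ) : S¹) = (x : S¹) :=
  ((coe_eq_coe_iff x (x + k)).2 ⟨k, rfl⟩).symm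

/-- From an orientation-preserving circle homeomorphism with a fixed point, extract an
order isomorphism of `ℝ` lifting it and fixing a point, whose fixed points are exactly
the lifts of the fixed points of `f`. -/
lemma good_lift (f : S¹ ≃ₜ S¹) (hf : OrientationPreserving f) (hf0 : (FixSet f).Nonempty) :
    ∃ Φ : ℝ ≃o ℝ, (∀ x : ℝ, f (x : S¹) = ((Φ x : ℝ) : S¹)) ∧ (∀ x, Φ (x+1) = Φ x + 1) ∧
      (∃ x, Φ x = x) ∧ (∀ x : ℝ, ((x:S¹) ∈ FixSet f ↔ Φ x = x)) := by
  obtain ⟨F, hF⟩ := hf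
  obtain ⟨s, hs⟩ := hf0
  obtain ⟨x0, rfl⟩ := coe_surj s
  have hs' : f (x0 : S¹) = (x0 : S¹) := hs
  obtain ⟨k, hk⟩ : ∃ k : ℤ, x0 = F x0 + k := by
    rw [← coe_eq_coe_iff]
    rw [← hF x0]
    exact hs'
  set G : ℝ → ℝ := fun y => F y + k with hGdef
  have hGx0 : G x0 = x0 := by rw [hGdef]; simp [← hk]
  have hGlift : ∀ y : ℝ, f (y : S¹) = ((G y : ℝ) : S¹) := by
    intro y
    rw [hF y, hGdef]
    exact (coe_add_int (F y) k).symm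
  have hGmono : Monotone G := fun a b h => by
    simp only [hGdef]
    exact add_le_add_left (F.mono h) _
  have hGper : ∀ y, G (y + 1) = G y + 1 := by
    intro y
    simp only [hGdef, F.map_add_one]
    ring
  have hGperZ := perZ hGper
  have hGinj : Function.Injective G := by
    intro a b hab
    have hFab : F a = F b := by
      have : F a + (k:ℝ) = F b + k := hab
      linarith
    have h1 : f (a : S¹) = f (b : S¹) := by rw [hF a, hF b, hFab]
    have h2 : (a : S¹) = (b : S¹) := f.injective h1
    obtain ⟨j, rfl⟩ := (coe_eq_coe_iff a b).1 h2
    have : G (a + j) = G a + j := hGperZ j a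
    rw [hab] at this
    have : (j:ℝ) = 0 := by linarith
    have : j = 0 := by exact_mod_cast this
    rw [this]
    simp
  have hGsurj : Function.Surjective G := by
    intro y
    obtain ⟨b, hb⟩ := coe_surj (f.symm ((y - k : ℝ) : S¹))
    have h1 : f (b : S¹) = ((y - k : ℝ) : S¹) := by rw [hb]; exact f.apply_symm_apply _
    rw [hF b] at h1
    obtain ⟨j, hj⟩ := (coe_eq_coe_iff (F b) (y - k)).1 h1
    refine ⟨b + j, ?_⟩
    have h2 : G (b + j) = G b + j := hGperZ j b
    rw [h2, hGdef]
    simp only []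
    push_cast
    linarith
  have hGsm : StrictMono G := hGmono.strictMono_of_injective hGinj
  refine ⟨StrictMono.orderIsoOfSurjective G hGsm hGsurj, ?_, ?_, ?_, ?_⟩
  · intro x
    rw [StrictMono.coe_orderIsoOfSurjective]
    exact hGlift x
  · intro x
    rw [StrictMono.coe_orderIsoOfSurjective]
    exact hGper x
  · exact ⟨x0, by rw [StrictMono.coe_orderIsoOfSurjective]; exact hGx0⟩
  · intro y
    rw [StrictMono.coe_orderIsoOfSurjective]
    constructor
    · intro hy
      have h1 : f (y : S¹) = (y : S¹) := hy
      rw [hGlift y] at h1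
      obtain ⟨j, hj⟩ := (coe_eq_coe_iff (G y) y).1 h1
      -- normalize y into [x0, x0 + 1)
      set y' := y - ⌊y - x0⌋ with hy'def
      have hy'1 : x0 ≤ y' := by
        have := Int.floor_le (y - x0)
        rw [hy'def]; linarith
      have hy'2 : y' < x0 + 1 := by
        have := Int.lt_floor_add_one (y - x0)
        rw [hy'def]; linarith
      have hGy' : G y' = y' - (j:ℝ) := by
        have h3 : G (y + (-⌊y - x0⌋ : ℤ)) = G y + (-⌊y - x0⌋ : ℤ) := hGperZ _ y
        have h4 : y + ((-⌊y - x0⌋ : ℤ) : ℝ) = y' := by rw [hy'def]; push_cast; ring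
        rw [h4] at h3
        rw [h3, hy'def]
        push_cast
        linarith [hj]
      have hb1 : x0 ≤ G y' := by rw [← hGx0]; exact hGmono hy'1
      have hb2 : G y' ≤ x0 + 1 := by
        have h7 := hGmono hy'2.le
        rw [hGper x0, hGx0] at h7
        exact h7
      have hj0 : j = 0 := by
        have hr1 : (j:ℝ) < 1 := by rw [hGy'] at hb1; linarith [hy'2]
        have hr2 : (-1:ℝ) ≤ (j:ℝ) := by rw [hGy'] at hb2; linarith [hy'1]
        have hj1 : j < 1 := by exact_mod_cast hr1
        have hj2 : -1 ≤ j := by exact_mod_cast hr2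
        rcases (by omega : j = 0 ∨ j = -1) with h | h
        · exact h
        · exfalso
          rw [h] at hGy'
          push_cast at hGy'
          have he2 : y' = x0 := by rw [hGy'] at hb2; linarith [hy'1]
          rw [he2] at hGy'
          rw [hGx0] at hGy'
          linarith
      rw [hj0] at hGy'
      rw [Int.cast_zero, sub_zero] at hGy'
      have h5 : G (y' + (⌊y - x0⌋ : ℤ)) = G y' + ⌊y - x0⌋ := hGperZ _ y'
      have h6 : y' + ((⌊y - x0⌋ : ℤ) : ℝ) = y := by rw [hy'def]; push_cast; ring
      rw [h6, hGy'] at h5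
      rw [h5]
      exact h6
    · intro hy
      show f (y : S¹) = (y : S¹)
      rw [hGlift y, hy]

/-! ### Group-theoretic application bits -/

lemma mul_apply (a b : S¹ ≃ₜ S¹) (s : S¹) : (a * b) s = a (b s) := rfl

lemma one_apply (s : S¹) : (1 : S¹ ≃ₜ S¹) s = s := rfl

lemma lift_iterate (f : S¹ ≃ₜ S¹) (Φ : ℝ → ℝ) (hlift : ∀ x : ℝ, f (x : S¹) = ((Φ x : ℝ) : S¹)) :
    ∀ (n : ℕ) (x : ℝ), (f ^ n) (x : S¹) = ((Φ^[n] x : ℝ) : S¹) := by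
  intro n
  induction n with
  | zero => intro x; rfl
  | succ n ih =>
    intro x
    rw [pow_succ, mul_apply, hlift x, ih (Φ x), Function.iterate_succ_apply]

lemma lift_inv (f : S¹ ≃ₜ S¹) (Φ : ℝ ≃o ℝ) (hlift : ∀ x : ℝ, f (x : S¹) = ((Φ x : ℝ) : S¹)) :
    ∀ x : ℝ, (f⁻¹) (x : S¹) = ((Φ.symm x : ℝ) : S¹) := by
  intro x
  apply f.injective
  have h1 : f ((f⁻¹) (x : S¹)) = (x : S¹) := f.apply_symm_apply x
  rw [h1, hlift, Φ.apply_symm_apply]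

/-- The key trapping estimate on the circle. -/
lemma circle_trap (f : S¹ ≃ₜ S¹) (Φ : ℝ ≃o ℝ)
    (hlift : ∀ x : ℝ, f (x : S¹) = ((Φ x : ℝ) : S¹))
    (hper : ∀ x, Φ (x+1) = Φ x + 1) (p0 : ℝ) (hp0 : Φ p0 = p0)
    (Uc : Set S¹) (hUc : IsOpen Uc) (hfixU : ∀ z : ℝ, Φ z = z → (z : S¹) ∈ Uc) :
    ∃ N : ℕ, ∀ m : ℤ, m ≠ 0 → ∀ s : S¹, s ∉ Uc → ((f ^ N : S¹ ≃ₜ S¹) ^ m) s ∈ Uc := by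
  set U : Set ℝ := ((↑) : ℝ → S¹) ⁻¹' Uc with hUdef
  have hcont : Continuous ((↑) : ℝ → S¹) := continuous_quotient_mk'
  have hU : IsOpen U := hUc.preimage hcont
  have hUper : ∀ x : ℝ, x ∈ U ↔ x + 1 ∈ U := by
    intro x
    have h1 : ((x + 1 : ℝ) : S¹) = (x : S¹) := by
      have := coe_add_int x 1
      push_cast at this
      exact this
    show ((x : S¹) ∈ Uc ↔ ((x + 1 : ℝ) : S¹) ∈ Uc)
    rw [h1]
  have hPU : ∀ z : ℝ, Φ z = z → z ∈ U := fun z hz => hfixU z hz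
  have hsymmper : ∀ x, Φ.symm (x+1) = Φ.symm x + 1 := symm_per hper
  have hsymmp0 : Φ.symm p0 = p0 := by
    rw [← hp0, Φ.symm_apply_apply, hp0]
  have hsymmPU : ∀ z : ℝ, Φ.symm z = z → z ∈ U := by
    intro z hz
    have : Φ z = z := by
      conv_lhs => rw [← hz]
      rw [Φ.apply_symm_apply]
    exact hPU z this
  obtain ⟨N1, hN1⟩ := real_trap Φ hper p0 hp0 U hU hPU hUper
  obtain ⟨N2, hN2⟩ := real_trap (Φ.symm) hsymmper p0 hsymmp0 U hU hsymmPU hUper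
  refine ⟨max (max N1 N2) 1, ?_⟩
  set N : ℕ := max (max N1 N2) 1 with hNdef
  have hNN1 : N1 ≤ N := le_trans (le_max_left _ _) (le_max_left _ _)
  have hNN2 : N2 ≤ N := le_trans (le_max_right _ _) (le_max_left _ _)
  have hN1' : 1 ≤ N := le_max_right _ _
  intro m hm s hsU
  obtain ⟨y, rfl⟩ := coe_surj s
  have hyU : y ∉ U := hsU
  rcases lt_or_gt_of_ne hm with hneg | hpos
  · -- m < 0
    set kk : ℕ := N * (-m).toNat with hkkdef
    have hk1 : N ≤ kk := by
      have : 1 ≤ (-m).toNat := by omega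
      calc N = N * 1 := (mul_one N).symm
        _ ≤ N * (-m).toNat := Nat.mul_le_mul_left N this
    have hpow : ((f ^ N : S¹ ≃ₜ S¹) ^ m) = ((f ^ kk : S¹ ≃ₜ S¹))⁻¹ := by
      have h2 : (-m) = ((-m).toNat : ℤ) := (Int.toNat_of_nonneg (by omega)).symm
      calc (f ^ N : S¹ ≃ₜ S¹) ^ m = ((f ^ N) ^ (-m))⁻¹ := by rw [← zpow_neg, neg_neg]
        _ = ((f ^ N) ^ ((-m).toNat : ℤ))⁻¹ := by rw [← h2]
        _ = ((f ^ N) ^ ((-m).toNat))⁻¹ := by rw [zpow_natCast]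
        _ = (f ^ kk)⁻¹ := by rw [← pow_mul]
    rw [hpow, ← inv_pow]
    have hlift' := lift_inv f Φ hlift
    have := lift_iterate (f⁻¹) (Φ.symm) hlift' kk y
    rw [this]
    exact hN2 kk (le_trans hNN2 hk1) y hyU
  · -- m > 0
    set kk : ℕ := N * m.toNat with hkkdef
    have hk1 : N ≤ kk := by
      have : 1 ≤ m.toNat := by omega
      calc N = N * 1 := (mul_one N).symm
        _ ≤ N * m.toNat := Nat.mul_le_mul_left N this
    have hpow : ((f ^ N : S¹ ≃ₜ S¹) ^ m) = (f ^ kk : S¹ ≃ₜ S¹) := by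
      have h2 : m = (m.toNat : ℤ) := (Int.toNat_of_nonneg (by omega)).symm
      rw [h2, zpow_natCast, ← pow_mul]
    rw [hpow]
    rw [lift_iterate f Φ hlift kk y]
    exact hN1 kk (le_trans hNN1 hk1) y hyU

end FreeSubAux

open FreeSubAux

noncomputable instance : MulAction (S¹ ≃ₜ S¹) S¹ where
  smul f s := f s
  one_smul s := rfl
  mul_smul a b s := rfl

/-- If two orientation-preserving circle homeomorphisms both have fixed points but share no
common fixed point, then the group they generate contains a non-abelian free subgroup. -/
theorem stmt0 (f g : S¹ ≃ₜ S¹) (hf : OrientationPreserving f) (hg : OrientationPreserving g)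
    (hf0 : (FixSet f).Nonempty) (hg0 : (FixSet g).Nonempty)
    (hdisj : FixSet f ∩ FixSet g = ∅) :
    HasFreeSubgroup (Subgroup.closure {f, g}) := by
  classical
  -- separate the fixed-point sets by disjoint open sets
  have hfc : IsClosed (FixSet f) := isClosed_eq f.continuous continuous_id
  have hgc : IsClosed (FixSet g) := isClosed_eq g.continuous continuous_id
  have hsep : SeparatedNhds (FixSet f) (FixSet g) :=
    SeparatedNhds.of_isCompact_isCompact_isClosed hfc.isCompact hgc.isCompact hgc
      (Set.disjoint_iff_inter_eq_empty.2 hdisj)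
  obtain ⟨Uc, Vc, hUo, hVo, hfU, hgV, hUV⟩ := hsep
  -- lifts
  obtain ⟨Φ, hΦlift, hΦper, ⟨p0, hp0⟩, hΦfix⟩ := good_lift f hf hf0
  obtain ⟨Ψ, hΨlift, hΨper, ⟨q0, hq0⟩, hΨfix⟩ := good_lift g hg hg0
  obtain ⟨Nf, hNf⟩ := circle_trap f Φ hΦlift hΦper p0 hp0 Uc hUo
    (fun z hz => hfU ((hΦfix z).2 hz))
  obtain ⟨Ng, hNg⟩ := circle_trap g Ψ hΨlift hΨper q0 hq0 Vc hVo
    (fun z hz => hgV ((hΨfix z).2 hz))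
  set a : Fin 2 → (S¹ ≃ₜ S¹) := ![f ^ Nf, g ^ Ng] with hadef
  set X : Fin 2 → Set S¹ := ![Uc, Vc] with hXdef
  -- ping-pong data
  have hXne : ∀ i, (X i).Nonempty := by
    intro i
    fin_cases i
    · obtain ⟨s, hs⟩ := hf0; exact ⟨s, hfU hs⟩
    · obtain ⟨s, hs⟩ := hg0; exact ⟨s, hgV hs⟩
  have hXdisj : Pairwise (Disjoint on X) := by
    intro i j hij
    fin_cases i <;> fin_cases j <;>
      first
        | exact absurd rfl hij
        | exact hUV
        | exact hUV.symm
  set H : Fin 2 → Type := fun _ => Multiplicative ℤ with hHdef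
  set fhom : ∀ i, H i →* (S¹ ≃ₜ S¹) := fun i => zpowersHom _ (a i) with hfhomdef
  have hpp : Pairwise fun i j => ∀ h : H i, h ≠ 1 → fhom i h • X j ⊆ X i := by
    intro i j hij
    intro h hh
    have hm : (Multiplicative.toAdd h : ℤ) ≠ 0 := by
      intro h0
      exact hh (toAdd_eq_zero.1 h0)
    rintro _ ⟨s, hs, rfl⟩
    fin_cases i <;> fin_cases j
    · exact absurd rfl hij
    · -- i = 0, j = 1 : a 0 power maps Vc into Uc
      have hsV : s ∈ Vc := hs
      have hsU : s ∉ Uc := fun hmem => (hUV.le_bot ⟨hmem, hsV⟩)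
      exact hNf (Multiplicative.toAdd h) hm s hsU
    · -- i = 1, j = 0
      have hsU : s ∈ Uc := hs
      have hsV : s ∉ Vc := fun hmem => (hUV.le_bot ⟨hsU, hmem⟩)
      exact hNg (Multiplicative.toAdd h) hm s hsV
    · exact absurd rfl hij
  have hcard : (3 : Cardinal) ≤ Cardinal.mk (Fin 2) ∨ ∃ i, (3:Cardinal) ≤ Cardinal.mk (H i) := by
    right
    refine ⟨0, ?_⟩
    have h1 : Cardinal.mk (H 0) = Cardinal.mk ℤ := (Cardinal.mk_congr Multiplicative.ofAdd).symm
    rw [h1]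
    have h2 : ((3:ℕ) : Cardinal) ≤ Cardinal.aleph0 := (Cardinal.nat_lt_aleph0 3).le
    have h3 : Cardinal.aleph0 ≤ Cardinal.mk ℤ := Cardinal.aleph0_le_mk ℤ
    have : ((3:ℕ) : Cardinal) = (3 : Cardinal) := by norm_cast
    rw [← this]
    exact le_trans h2 h3
  have hinj : Function.Injective (Monoid.CoprodI.lift fhom) :=
    Monoid.CoprodI.lift_injective_of_ping_pong fhom hcard X hXne hXdisj hpp
  -- the embedding of the free group
  set χ : FreeGroup (Fin 2) →* Monoid.CoprodI H :=
    FreeGroup.lift (fun i => (Monoid.CoprodI.of (M := H) (i := i) (Multiplicative.ofAdd (1:ℤ)))) with hχdef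
  set ρ : Monoid.CoprodI H →* FreeGroup (Fin 2) :=
    Monoid.CoprodI.lift (fun i => zpowersHom _ (FreeGroup.of i)) with hρdef
  have hρχ : ∀ w, ρ (χ w) = w := by
    intro w
    have : ρ.comp χ = MonoidHom.id _ := by
      apply FreeGroup.ext_hom
      intro i
      show ρ (χ (FreeGroup.of i)) = FreeGroup.of i
      rw [hχdef, FreeGroup.lift_apply_of, hρdef, Monoid.CoprodI.lift_of, zpowersHom_apply,
        toAdd_ofAdd, zpow_one]
    calc ρ (χ w) = (ρ.comp χ) w := rfl
      _ = w := by rw [this]; rfl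
  have hχinj : Function.Injective χ := fun w1 w2 h => by
    rw [← hρχ w1, ← hρχ w2, h]
  set φ : FreeGroup (Fin 2) →* (S¹ ≃ₜ S¹) := (Monoid.CoprodI.lift fhom).comp χ with hφdef
  have hφinj : Function.Injective φ := hinj.comp hχinj
  have hφof : ∀ i, φ (FreeGroup.of i) = a i := by
    intro i
    show (Monoid.CoprodI.lift fhom) (χ (FreeGroup.of i)) = a i
    rw [hχdef, FreeGroup.lift_apply_of, Monoid.CoprodI.lift_of]
    show zpowersHom _ (a i) (Multiplicative.ofAdd 1) = a i
    rw [zpowersHom_apply, toAdd_ofAdd, zpow_one]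
  have hamem : ∀ i, a i ∈ Subgroup.closure ({f, g} : Set (S¹ ≃ₜ S¹)) := by
    intro i
    fin_cases i
    · exact pow_mem (Subgroup.subset_closure (by simp)) Nf
    · exact pow_mem (Subgroup.subset_closure (by simp)) Ng
  have hφmem : ∀ w, φ w ∈ Subgroup.closure ({f, g} : Set (S¹ ≃ₜ S¹)) := by
    intro w
    induction w using FreeGroup.induction_on with
    | C1 => simpa using Subgroup.one_mem _
    | of i =>
      have hpi : (pure i : FreeGroup (Fin 2)) = FreeGroup.of i := rfl
      rw [hφof i]; exact hamem i
    | inv_of i hi => rw [map_inv]; exact inv_mem hi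
    | mul w1 w2 h1 h2 => rw [map_mul]; exact mul_mem h1 h2
  exact ⟨φ, hφinj, hφmem⟩
end

section
/- Let G be a group of permutations of a set X, and g₁, g₂ ∈ G. If X₁ and X₂ are disjoint nonempty subsets of X such that for all nonzero integers n and all i ≠ j, g_i^n(X_j) ⊆ X_i, then g₁ and g₂ freely generate a free subgroup of rank 2. -/
open Monoid.CoprodI Cardinal Pointwise

/-- The Ping-pong Lemma: if `g₁, g₂` are permutations of `X` in a permutation group `G`, and
`X₁, X₂` are disjoint nonempty subsets with `g_i^n (X_j) ⊆ X_i` for all `n ≠ 0` and `i ≠ j`,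
then `g₁, g₂` freely generate a free group of rank two. -/
theorem stmt1 {X : Type*} (G : Subgroup (Equiv.Perm X)) (g₁ g₂ : Equiv.Perm X)
    (hg₁ : g₁ ∈ G) (hg₂ : g₂ ∈ G)
    (X₁ X₂ : Set X) (h₁ : X₁.Nonempty) (h₂ : X₂.Nonempty) (hdisj : Disjoint X₁ X₂)
    (hp₁ : ∀ n : ℤ, n ≠ 0 → ⇑(g₁ ^ n) '' X₂ ⊆ X₁)
    (hp₂ : ∀ n : ℤ, n ≠ 0 → ⇑(g₂ ^ n) '' X₁ ⊆ X₂) :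
    Function.Injective
      ⇑(FreeGroup.lift (fun i : Fin 2 => if i = 0 then g₁ else g₂) :
        FreeGroup (Fin 2) →* Equiv.Perm X) := by
  set a : Fin 2 → Equiv.Perm X := fun i => if i = 0 then g₁ else g₂ with ha
  have : FreeGroup.lift a =
      (Monoid.CoprodI.lift fun i : Fin 2 => FreeGroup.lift fun _ : Unit => a i).comp
        (@freeGroupEquivCoprodI (Fin 2)).toMonoidHom := by
    ext i
    simp
  rw [this, MonoidHom.coe_comp]
  refine Function.Injective.comp ?_ (MulEquiv.injective freeGroupEquivCoprodI)
  let H : Fin 2 → Type := fun _ => FreeGroup Unit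
  let f : ∀ i, H i →* Equiv.Perm X := fun i => FreeGroup.lift fun _ => a i
  let X' : Fin 2 → Set X := fun i => if i = 0 then X₁ else X₂
  apply lift_injective_of_ping_pong f _ X'
  · show ∀ i, (X' i).Nonempty
    intro i
    by_cases h : i = 0 <;> simp [X', h, h₁, h₂]
  · show Pairwise (Function.onFun Disjoint X')
    intro i j hij
    fin_cases i <;> fin_cases j <;> simp_all [X'] <;>
      first | exact hdisj | exact hdisj.symm
  · show Pairwise fun i j => ∀ h : H i, h ≠ 1 → f i h • X' j ⊆ X' i
    intro i j hij
    refine FreeGroup.freeGroupUnitEquivInt.forall_congr_left.mpr ?_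
    intro n hne1
    have hnne0 : n ≠ 0 := by
      rintro rfl
      apply hne1
      simp [FreeGroup.freeGroupUnitEquivInt]
    change FreeGroup.lift (fun _ => a i) (FreeGroup.of () ^ n) • X' j ⊆ X' i
    simp only [map_zpow, FreeGroup.lift_apply_of]
    have hsmul : ∀ (g : Equiv.Perm X) (S : Set X), g • S = ⇑g '' S := fun _ _ => rfl
    rw [hsmul]
    fin_cases i <;> fin_cases j <;> simp_all [X', a] <;>
      first | exact hp₁ n hnne0 | exact hp₂ n hnne0
  · right
    refine ⟨0, ?_⟩
    have : #(H 0) = #ℤ := Cardinal.mk_congr FreeGroup.freeGroupUnitEquivInt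
    rw [this, Cardinal.mk_int]
    exact_mod_cast (Cardinal.nat_lt_aleph0 3).le
end

section
/- Let G ≤ Homeo₊(S^1) contain no non-abelian free subgroup. Then G₀ = {g ∈ G : Fix(g) ≠ ∅} is a normal subgroup of G. -/
open Function Set

section Development

open Metric Filter Topology Pointwise

namespace CircleProof

/-- Action of circle homeomorphisms on the circle. -/
noncomputable instance : MulAction (S¹ ≃ₜ S¹) S¹ where
  smul g x := g x
  one_smul _ := rfl
  mul_smul _ _ _ := rfl

lemma smul_def (g : S¹ ≃ₜ S¹) (x : S¹) : g • x = g x := rfl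

lemma mul_apply (f g : S¹ ≃ₜ S¹) (x : S¹) : (f * g) x = f (g x) := rfl

lemma inv_apply_apply (f : S¹ ≃ₜ S¹) (x : S¹) : f⁻¹ (f x) = x := f.symm_apply_apply x

lemma apply_inv_apply (f : S¹ ≃ₜ S¹) (x : S¹) : f (f⁻¹ x) = x := f.apply_symm_apply x

lemma pr_eq_pr {x y : ℝ} : (x : S¹) = (y : S¹) ↔ ∃ m : ℤ, y = x + m := by
  constructor
  · intro h
    have h' : -x + y ∈ AddSubgroup.zmultiples (1 : ℝ) := QuotientAddGroup.eq.mp h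
    obtain ⟨m, hm⟩ := AddSubgroup.mem_zmultiples_iff.mp h'
    rw [zsmul_eq_mul, mul_one] at hm
    exact ⟨m, by linarith⟩
  · rintro ⟨m, rfl⟩
    apply (QuotientAddGroup.eq).mpr
    refine AddSubgroup.mem_zmultiples_iff.mpr ⟨m, by rw [zsmul_eq_mul, mul_one]; ring⟩

lemma pr_surjective : Function.Surjective (fun x : ℝ => (x : S¹)) :=
  QuotientAddGroup.mk_surjective

/-- Integer translation equivariance, from `+1` equivariance. -/
lemma map_add_int (E : ℝ ≃o ℝ) (h1 : ∀ x, E (x + 1) = E x + 1) :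
    ∀ (m : ℤ) (x : ℝ), E (x + m) = E x + m := by
  have hsub : ∀ x : ℝ, E (x - 1) = E x - 1 := by
    intro x
    have := h1 (x - 1)
    simp at this
    linarith
  intro m
  induction m using Int.induction_on with
  | zero => simp
  | succ n ih =>
      intro x
      have h2 : (x + ((n : ℤ) + 1 : ℤ) : ℝ) = (x + ((n : ℤ) : ℝ)) + 1 := by push_cast; ring
      rw [h2, h1, ih x]
      push_cast; ring
  | pred n ih =>
      intro x
      have h2 : (x + (-(n : ℤ) - 1 : ℤ) : ℝ) = (x + ((-(n : ℤ) : ℤ) : ℝ)) - 1 := by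
        push_cast; ring
      rw [h2, hsub, ih x]
      push_cast; ring

lemma symm_map_add_int (E : ℝ ≃o ℝ) (h1 : ∀ x, E (x + 1) = E x + 1) :
    ∀ (m : ℤ) (x : ℝ), E.symm (x + m) = E.symm x + m := by
  intro m x
  apply E.injective
  rw [map_add_int E h1 m (E.symm x)]
  simp

lemma iterate_map_add_int (Φ : ℝ → ℝ) (hΦ : ∀ (m : ℤ) (x : ℝ), Φ (x + m) = Φ x + m)
    (n : ℕ) (m : ℤ) (x : ℝ) : Φ^[n] (x + m) = Φ^[n] x + m := by
  induction n generalizing x with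
  | zero => simp
  | succ k ih => rw [Function.iterate_succ_apply, Function.iterate_succ_apply, hΦ, ih]

lemma orderIso_continuous (E : ℝ ≃o ℝ) : Continuous E := by
  have := E.toHomeomorph.continuous
  exact this

/-- On an interval with fixed endpoints and no interior fixed points,
either `Φ > id` or `Φ < id` throughout. -/
lemma sign_const (Φ : ℝ ≃o ℝ) {a b : ℝ}
    (hnofix : ∀ x, a < x → x < b → Φ x ≠ x) :
    (∀ x, a < x → x < b → x < Φ x) ∨ (∀ x, a < x → x < b → Φ x < x) := by
  by_contra hcon
  push_neg at hcon
  obtain ⟨⟨u, hau, hub, hu⟩, ⟨v, hav, hvb, hv⟩⟩ := hcon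
  have hu' : Φ u < u := lt_of_le_of_ne hu (hnofix u hau hub)
  have hv' : v < Φ v := lt_of_le_of_ne hv (fun h => hnofix v hav hvb h.symm)
  have hcont : Continuous fun x => Φ x - x := (orderIso_continuous Φ).sub continuous_id
  rcases le_total u v with huv | hvu
  · have h0 : (0:ℝ) ∈ Set.Icc (Φ u - u) (Φ v - v) := ⟨by linarith, by linarith⟩
    obtain ⟨w, hw, hw0⟩ := intermediate_value_Icc huv hcont.continuousOn h0
    replace hw0 : Φ w - w = 0 := hw0
    exact hnofix w (lt_of_lt_of_le hau hw.1) (lt_of_le_of_lt hw.2 hvb) (by linarith)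
  · have h0 : (0:ℝ) ∈ Set.Icc (Φ u - u) (Φ v - v) := ⟨by linarith, by linarith⟩
    obtain ⟨w, hw, hw0⟩ := intermediate_value_Icc' hvu hcont.continuousOn h0
    replace hw0 : Φ w - w = 0 := hw0
    exact hnofix w (lt_of_lt_of_le hav hw.1) (lt_of_le_of_lt hw.2 hub) (by linarith)

lemma interval_invariant (Φ : ℝ ≃o ℝ) {a b : ℝ} (ha : Φ a = a) (hb : Φ b = b)
    {x : ℝ} (hax : a < x) (hxb : x < b) : a < Φ x ∧ Φ x < b := by
  constructor
  · have := Φ.strictMono hax; rwa [ha] at this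
  · have := Φ.strictMono hxb; rwa [hb] at this

lemma iterate_interval_invariant (Φ : ℝ ≃o ℝ) {a b : ℝ} (ha : Φ a = a) (hb : Φ b = b)
    (n : ℕ) {x : ℝ} (hax : a < x) (hxb : x < b) : a < Φ^[n] x ∧ Φ^[n] x < b := by
  induction n generalizing x with
  | zero => exact ⟨hax, hxb⟩
  | succ k ih =>
      rw [Function.iterate_succ_apply]
      obtain ⟨h1, h2⟩ := interval_invariant Φ ha hb hax hxb
      exact ih h1 h2

/-- Escape lemma, increasing case: iterates converge uniformly (on `[c,b)`) to `b`. -/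
lemma escape_up (Φ : ℝ ≃o ℝ) {a b : ℝ} (ha : Φ a = a) (hb : Φ b = b)
    (hup : ∀ x, a < x → x < b → x < Φ x) {c : ℝ} (hc : a < c) (hcb : c < b)
    {ε : ℝ} (hε : 0 < ε) :
    ∃ N, ∀ n, N ≤ n → ∀ y, c ≤ y → y < b → b - ε < Φ^[n] y ∧ Φ^[n] y < b := by
  set seq : ℕ → ℝ := fun n => Φ^[n] c with hseq
  have hbound : ∀ n, a < seq n ∧ seq n < b := fun n =>
    iterate_interval_invariant Φ ha hb n hc hcb
  have hmono : Monotone seq := by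
    apply monotone_nat_of_le_succ
    intro n
    have := hup (seq n) (hbound n).1 (hbound n).2
    rw [hseq]
    simp only [Function.iterate_succ_apply']
    exact this.le
  have hbdd : BddAbove (Set.range seq) := ⟨b, by rintro _ ⟨n, rfl⟩; exact (hbound n).2.le⟩
  set L := ⨆ n, seq n with hL
  have htend : Tendsto seq atTop (𝓝 L) := tendsto_atTop_ciSup hmono hbdd
  have hLb : L ≤ b := ciSup_le fun n => (hbound n).2.le
  have hcL : c ≤ L := le_ciSup hbdd 0
  have haL : a < L := lt_of_lt_of_le hc hcL
  have hfixL : Φ L = L := by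
    have h1 : Tendsto (fun n => Φ (seq n)) atTop (𝓝 (Φ L)) :=
      ((orderIso_continuous Φ).tendsto L).comp htend
    have h2 : (fun n => Φ (seq n)) = fun n => seq (n + 1) := by
      funext n; rw [hseq]; simp [Function.iterate_succ_apply']
    have h3 : Tendsto (fun n => seq (n + 1)) atTop (𝓝 L) :=
      htend.comp (tendsto_add_atTop_nat 1)
    rw [h2] at h1
    exact tendsto_nhds_unique h1 h3
  have hLeqb : L = b := by
    rcases lt_or_eq_of_le hLb with h | h
    · exact absurd hfixL (ne_of_lt (hup L haL h)).symm.elim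
    · exact h
  have hev : ∀ᶠ n in atTop, b - ε < seq n := by
    apply htend.eventually
    rw [hLeqb]
    exact eventually_gt_nhds (by linarith)
  obtain ⟨N, hN⟩ := eventually_atTop.mp hev
  refine ⟨N, fun n hn y hcy hyb => ?_⟩
  have hay : a < y := lt_of_lt_of_le hc hcy
  constructor
  · calc b - ε < seq n := hN n hn
      _ ≤ Φ^[n] y := (Φ.strictMono.monotone.iterate n) hcy
  · exact (iterate_interval_invariant Φ ha hb n hay hyb).2

/-- Escape lemma, decreasing case. -/
lemma escape_down (Φ : ℝ ≃o ℝ) {a b : ℝ} (ha : Φ a = a) (hb : Φ b = b)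
    (hdn : ∀ x, a < x → x < b → Φ x < x) {d : ℝ} (hd : a < d) (hdb : d < b)
    {ε : ℝ} (hε : 0 < ε) :
    ∃ N, ∀ n, N ≤ n → ∀ y, a < y → y ≤ d → a < Φ^[n] y ∧ Φ^[n] y < a + ε := by
  set seq : ℕ → ℝ := fun n => Φ^[n] d with hseq
  have hbound : ∀ n, a < seq n ∧ seq n < b := fun n =>
    iterate_interval_invariant Φ ha hb n hd hdb
  have hmono : Antitone seq := by
    apply antitone_nat_of_succ_le
    intro n
    have := hdn (seq n) (hbound n).1 (hbound n).2
    rw [hseq]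
    simp only [Function.iterate_succ_apply']
    exact this.le
  have hbdd : BddBelow (Set.range seq) := ⟨a, by rintro _ ⟨n, rfl⟩; exact (hbound n).1.le⟩
  set L := ⨅ n, seq n with hL
  have htend : Tendsto seq atTop (𝓝 L) := tendsto_atTop_ciInf hmono hbdd
  have hLa : a ≤ L := le_ciInf fun n => (hbound n).1.le
  have hLd : L ≤ d := ciInf_le hbdd 0
  have hLb : L < b := lt_of_le_of_lt hLd hdb
  have hfixL : Φ L = L := by
    have h1 : Tendsto (fun n => Φ (seq n)) atTop (𝓝 (Φ L)) :=
      ((orderIso_continuous Φ).tendsto L).comp htend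
    have h2 : (fun n => Φ (seq n)) = fun n => seq (n + 1) := by
      funext n; rw [hseq]; simp [Function.iterate_succ_apply']
    have h3 : Tendsto (fun n => seq (n + 1)) atTop (𝓝 L) :=
      htend.comp (tendsto_add_atTop_nat 1)
    rw [h2] at h1
    exact tendsto_nhds_unique h1 h3
  have hLeqa : L = a := by
    rcases lt_or_eq_of_le hLa with h | h
    · exact absurd hfixL (ne_of_lt (hdn L h hLb)).elim
    · exact h.symm
  have hev : ∀ᶠ n in atTop, seq n < a + ε := by
    rw [hLeqa] at htend
    exact htend.eventually (eventually_lt_nhds (by linarith))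
  obtain ⟨N, hN⟩ := eventually_atTop.mp hev
  refine ⟨N, fun n hn y hay hyd => ?_⟩
  have hyb : y < b := lt_of_le_of_lt hyd hdb
  constructor
  · exact (iterate_interval_invariant Φ ha hb n hay hyb).1
  · calc Φ^[n] y ≤ seq n := (Φ.strictMono.monotone.iterate n) hyd
      _ < a + ε := hN n hn


/-- The core uniform escape lemma: all sufficiently high forward and backward iterates
map the set of points `ε`-far from the fixed set into the `ε`-neighborhood of the fixed set. -/
lemma core (E : ℝ ≃o ℝ) (h1 : ∀ x, E (x + 1) = E x + 1) {ε : ℝ} (hε : 0 < ε)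
    (hCne : ∃ x, E x = x) :
    ∃ N : ℕ, 0 < N ∧ ∀ n, N ≤ n → ∀ x : ℝ, (∀ c, E c = c → ε ≤ |x - c|) →
      ((∃ c, E c = c ∧ |E^[n] x - c| < ε) ∧
       (∃ c, E c = c ∧ |(⇑E.symm)^[n] x - c| < ε)) := by
  obtain ⟨x₀, hx₀⟩ := hCne
  set C : Set ℝ := {x | E x = x} with hC
  have hEz := map_add_int E h1
  have hSz := symm_map_add_int E h1
  have hCper : ∀ (m : ℤ) {c}, c ∈ C → c + m ∈ C := by
    intro m c hc
    show E _ = _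
    rw [hEz m c, hc]
  have hCcl : IsClosed C := isClosed_eq (orderIso_continuous E) continuous_id
  have hsymmfix : ∀ {c}, c ∈ C → E.symm c = c := by
    intro c hc
    apply E.injective
    rw [E.apply_symm_apply, hc]
  -- every point has elements of C below and above it
  have hbelow : ∀ x : ℝ, ∃ c ∈ C, c ≤ x := by
    intro x
    refine ⟨x₀ + (⌊x - x₀⌋ : ℤ), hCper _ hx₀, ?_⟩
    have := Int.floor_le (x - x₀)
    linarith
  have habove : ∀ x : ℝ, ∃ c ∈ C, x ≤ c := by
    intro x
    refine ⟨x₀ + (⌈x - x₀⌉ : ℤ), hCper _ hx₀, ?_⟩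
    have := Int.le_ceil (x - x₀)
    linarith
  -- the compact set of points in [0,1] that are ε-far from C
  set K : Set ℝ := {x ∈ Set.Icc (0:ℝ) 1 | ∀ c ∈ C, ε ≤ |x - c|} with hK
  have hKcl : IsClosed K := by
    have : K = Set.Icc (0:ℝ) 1 ∩ ⋂ c ∈ C, {x : ℝ | ε ≤ |x - c|} := by
      ext x
      constructor
      · rintro ⟨h1', h2'⟩
        exact ⟨h1', Set.mem_iInter₂.mpr h2'⟩
      · rintro ⟨h1', h2'⟩
        exact ⟨h1', Set.mem_iInter₂.mp h2'⟩
    rw [this]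
    refine isClosed_Icc.inter (isClosed_biInter fun c _ => ?_)
    exact isClosed_le continuous_const ((continuous_id.sub continuous_const).abs)
  have hKcompact : IsCompact K := (isCompact_Icc.of_isClosed_subset hKcl
    (fun x hx => hx.1))
  have hKnotC : ∀ {x}, x ∈ K → x ∉ C := by
    intro x hx hc
    have h0 := hx.2 x hc
    rw [sub_self, abs_zero] at h0
    linarith
  -- local statement: around each point of K there is an interval that works
  have hP : ∀ p : K, ∃ I : Set ℝ, IsOpen I ∧ (p : ℝ) ∈ I ∧ ∃ N : ℕ, ∀ n, N ≤ n →
      ∀ y ∈ K, y ∈ I →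
        ((∃ c, E c = c ∧ |E^[n] y - c| < ε) ∧
         (∃ c, E c = c ∧ |(⇑E.symm)^[n] y - c| < ε)) := by
    rintro ⟨x, hxK⟩
    have hxC : x ∉ C := hKnotC hxK
    -- construct the complementary interval around x
    obtain ⟨cb, hcb, hcbx⟩ := hbelow x
    obtain ⟨ca, hca, hcax⟩ := habove x
    set a := sSup (C ∩ Set.Iic x) with ha
    set b := sInf (C ∩ Set.Ici x) with hb
    have hane : (C ∩ Set.Iic x).Nonempty := ⟨cb, hcb, hcbx⟩
    have hbne : (C ∩ Set.Ici x).Nonempty := ⟨ca, hca, hcax⟩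
    have habdd : BddAbove (C ∩ Set.Iic x) := ⟨x, fun y hy => hy.2⟩
    have hbbdd : BddBelow (C ∩ Set.Ici x) := ⟨x, fun y hy => hy.2⟩
    have haC : a ∈ C := ((hCcl.inter isClosed_Iic).csSup_mem hane habdd).1
    have hbC : b ∈ C := ((hCcl.inter isClosed_Ici).csInf_mem hbne hbbdd).1
    have hax' : a ≤ x := ((hCcl.inter isClosed_Iic).csSup_mem hane habdd).2
    have hxb' : x ≤ b := ((hCcl.inter isClosed_Ici).csInf_mem hbne hbbdd).2
    have hax : a < x := lt_of_le_of_ne hax' (fun h => hxC (h ▸ haC))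
    have hxb : x < b := lt_of_le_of_ne hxb' (fun h => hxC (h.symm ▸ hbC))
    have hnofix : ∀ y, a < y → y < b → E y ≠ y := by
      intro y hay hyb hy
      rcases le_total y x with h | h
      · exact absurd (le_csSup habdd ⟨hy, h⟩) (not_le.mpr hay)
      · exact absurd (csInf_le hbbdd ⟨hy, h⟩) (not_le.mpr hyb)
    -- every point of K in (a,b) lies in [a+ε, b-ε]
    have hfar : ∀ y ∈ K, a < y → y < b → a + ε ≤ y ∧ y ≤ b - ε := by
      intro y hy hay hyb
      have h1' := hy.2 a haC
      have h2' := hy.2 b hbC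
      rw [abs_of_pos (by linarith)] at h1'
      rw [abs_of_neg (by linarith)] at h2'
      constructor <;> linarith
    have hab : a < b := lt_trans hax hxb
    have haεb : a + ε ≤ b - ε := by
      obtain ⟨h1', h2'⟩ := hfar x hxK hax hxb
      linarith
    have haε : a < a + ε := by linarith
    have haεb' : a + ε < b := by linarith
    have hbε : a < b - ε := by linarith
    have hbε' : b - ε < b := by linarith
    have hsymm_a : E.symm a = a := hsymmfix haC
    have hsymm_b : E.symm b = b := hsymmfix hbC
    -- trichotomy
    rcases sign_const E hnofix with hup | hdn
    · -- E increasing on (a,b); E.symm decreasing there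
      have hdn' : ∀ y, a < y → y < b → E.symm y < y := by
        intro y hay hyb
        obtain ⟨h1', h2'⟩ := interval_invariant E.symm hsymm_a hsymm_b hay hyb
        have := hup _ h1' h2'
        rwa [E.apply_symm_apply] at this
      obtain ⟨N1, hN1⟩ := escape_up E haC hbC hup haε haεb' hε
      obtain ⟨N2, hN2⟩ := escape_down E.symm hsymm_a hsymm_b hdn' hbε hbε' hε
      refine ⟨Set.Ioo a b, isOpen_Ioo, ⟨hax, hxb⟩, max N1 N2, ?_⟩
      intro n hn y hyK hyI
      obtain ⟨hy1, hy2⟩ := hfar y hyK hyI.1 hyI.2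
      constructor
      · obtain ⟨g1, g2⟩ := hN1 n (le_trans (le_max_left _ _) hn) y hy1 (by linarith)
        exact ⟨b, hbC, by rw [abs_of_neg (by linarith)]; linarith⟩
      · obtain ⟨g1, g2⟩ := hN2 n (le_trans (le_max_right _ _) hn) y (by linarith) hy2
        exact ⟨a, haC, by rw [abs_of_pos (by linarith)]; linarith⟩
    · -- E decreasing on (a,b); E.symm increasing there
      have hup' : ∀ y, a < y → y < b → y < E.symm y := by
        intro y hay hyb
        obtain ⟨h1', h2'⟩ := interval_invariant E.symm hsymm_a hsymm_b hay hyb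
        have := hdn _ h1' h2'
        rwa [E.apply_symm_apply] at this
      obtain ⟨N1, hN1⟩ := escape_down E haC hbC hdn hbε hbε' hε
      obtain ⟨N2, hN2⟩ := escape_up E.symm hsymm_a hsymm_b hup' haε haεb' hε
      refine ⟨Set.Ioo a b, isOpen_Ioo, ⟨hax, hxb⟩, max N1 N2, ?_⟩
      intro n hn y hyK hyI
      obtain ⟨hy1, hy2⟩ := hfar y hyK hyI.1 hyI.2
      constructor
      · obtain ⟨g1, g2⟩ := hN1 n (le_trans (le_max_left _ _) hn) y (by linarith) hy2
        exact ⟨a, haC, by rw [abs_of_pos (by linarith)]; linarith⟩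
      · obtain ⟨g1, g2⟩ := hN2 n (le_trans (le_max_right _ _) hn) y hy1 (by linarith)
        exact ⟨b, hbC, by rw [abs_of_neg (by linarith)]; linarith⟩
  choose I hIopen hImem NI hNI using hP
  have hcover : K ⊆ ⋃ p : K, I p := by
    intro x hx
    exact Set.mem_iUnion.mpr ⟨⟨x, hx⟩, hImem ⟨x, hx⟩⟩
  obtain ⟨t, ht⟩ := hKcompact.elim_finite_subcover I hIopen hcover
  set N0 : ℕ := (t.sup NI) + 1 with hN0
  refine ⟨N0, Nat.succ_pos _, ?_⟩
  intro n hn x hxfar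
  -- reduce to the fundamental domain
  set m : ℤ := ⌊x⌋ with hm
  set x' : ℝ := x - m with hx'
  have hx'mem : x' ∈ Set.Icc (0:ℝ) 1 := by
    constructor
    · have := Int.floor_le x; simp only [hx']; linarith
    · have := Int.lt_floor_add_one x; simp only [hx']; linarith
  have hx'far : ∀ c ∈ C, ε ≤ |x' - c| := by
    intro c hc
    have : x' - c = x - (c + m) := by simp only [hx']; ring
    rw [this]
    exact hxfar _ (hCper m hc)
  have hx'K : x' ∈ K := ⟨hx'mem, hx'far⟩
  obtain ⟨p, hpt, hpI⟩ := Set.mem_iUnion₂.mp (ht hx'K)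
  have hnp : NI p ≤ n := le_trans (le_trans (Finset.le_sup hpt) (Nat.le_succ _)) hn
  obtain ⟨⟨c1, hc1, hc1'⟩, ⟨c2, hc2, hc2'⟩⟩ := hNI p n hnp x' hx'K hpI
  have hxx' : x = x' + m := by simp only [hx']; ring
  constructor
  · refine ⟨c1 + m, hCper m hc1, ?_⟩
    rw [hxx', iterate_map_add_int E hEz n m x']
    have : E^[n] x' + m - (c1 + m) = E^[n] x' - c1 := by ring
    rw [this]
    exact hc1'
  · refine ⟨c2 + m, hCper m hc2, ?_⟩
    rw [hxx', iterate_map_add_int E.symm hSz n m x']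
    have : (⇑E.symm)^[n] x' + m - (c2 + m) = (⇑E.symm)^[n] x' - c2 := by ring
    rw [this]
    exact hc2'

/-- An orientation-preserving circle homeomorphism with a fixed point admits a lift
which is an order isomorphism of `ℝ`, commutes with `+1`, and has a genuine fixed point. -/
lemma exists_nice_lift (f : S¹ ≃ₜ S¹) (hf : OrientationPreserving f)
    (hfix : (FixSet f).Nonempty) :
    ∃ E : ℝ ≃o ℝ, (∀ x : ℝ, f (x : S¹) = ((E x : ℝ) : S¹)) ∧
      (∀ x, E (x + 1) = E x + 1) ∧ (∃ x₀, E x₀ = x₀) := by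
  obtain ⟨F, hF⟩ := hf
  have hmono : Monotone F := F.monotone
  have h1 : ∀ x : ℝ, F (x + 1) = F x + 1 := F.map_add_one
  have hint : ∀ (k : ℤ) (x : ℝ), F (x + k) = F x + k := by
    intro k x
    have := F.map_int_add k x
    rw [add_comm (k:ℝ) x, add_comm (k:ℝ) (F x)] at this
    exact this
  have hinj : Function.Injective F := by
    intro x y hxy
    by_contra hne
    rcases lt_or_gt_of_ne hne with h | h
    · -- x < y and F x = F y
      have hy1 : y < x + 1 := by
        by_contra hge
        push_neg at hge
        have := hmono hge
        rw [h1] at this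
        rw [hxy] at this
        linarith
      have hprne : (x : S¹) ≠ (y : S¹) := by
        intro hpr
        obtain ⟨k, hk⟩ := pr_eq_pr.mp hpr
        have hk0 : (0:ℝ) < k := by linarith
        have hk1 : (k:ℝ) < 1 := by linarith
        have : (0:ℤ) < k := by exact_mod_cast hk0
        have : (1:ℤ) ≤ k := this
        have : (1:ℝ) ≤ (k:ℝ) := by exact_mod_cast this
        linarith
      apply hprne
      apply f.injective
      rw [hF x, hF y, hxy]
    · have hy1 : x < y + 1 := by
        by_contra hge
        push_neg at hge
        have := hmono hge
        rw [h1] at this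
        rw [hxy] at this
        linarith
      have hprne : (y : S¹) ≠ (x : S¹) := by
        intro hpr
        obtain ⟨k, hk⟩ := pr_eq_pr.mp hpr
        have hk0 : (0:ℝ) < k := by linarith
        have hk1 : (k:ℝ) < 1 := by linarith
        have : (0:ℤ) < k := by exact_mod_cast hk0
        have : (1:ℤ) ≤ k := this
        have : (1:ℝ) ≤ (k:ℝ) := by exact_mod_cast this
        linarith
      apply hprne
      apply f.injective
      rw [hF x, hF y, hxy]
  have hstrict : StrictMono F := hmono.strictMono_of_injective hinj
  have hsurj : Function.Surjective F := by
    intro z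
    obtain ⟨w, hw⟩ := pr_surjective (f.symm (z : S¹))
    have hfw : f (w : S¹) = (z : S¹) := by
      simp only at hw
      rw [hw, f.apply_symm_apply]
    rw [hF w] at hfw
    obtain ⟨k, hk⟩ := pr_eq_pr.mp hfw
    refine ⟨w + k, ?_⟩
    rw [hint k w]
    linarith
  set E1 := StrictMono.orderIsoOfSurjective F hstrict hsurj with hE1
  have hE1coe : ∀ x, E1 x = F x := fun x =>
    congrFun (StrictMono.coe_orderIsoOfSurjective F hstrict hsurj) x
  obtain ⟨s, hs⟩ := hfix
  obtain ⟨x₁, hx₁⟩ := pr_surjective s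
  have hfx₁ : f (x₁ : S¹) = (x₁ : S¹) := by
    simp only at hx₁
    rw [hx₁]; exact hs
  rw [hF x₁] at hfx₁
  obtain ⟨k, hk⟩ := pr_eq_pr.mp hfx₁
  -- x₁ = F x₁ + k, so E := E1 + k has fixed point x₁
  set E : ℝ ≃o ℝ := E1.trans (OrderIso.addRight (k : ℝ)) with hE
  have hEcoe : ∀ x, E x = F x + k := by
    intro x
    show (OrderIso.addRight (k:ℝ)) (E1 x) = F x + k
    rw [hE1coe]
    rfl
  refine ⟨E, ?_, ?_, ⟨x₁, ?_⟩⟩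
  · intro x
    rw [hF x, hEcoe]
    exact pr_eq_pr.mpr ⟨k, rfl⟩
  · intro x
    rw [hEcoe, hEcoe, h1]
    ring
  · rw [hEcoe]
    linarith


lemma pow_apply (f : S¹ ≃ₜ S¹) (E : ℝ ≃o ℝ)
    (hlift : ∀ x : ℝ, f (x : S¹) = ((E x : ℝ) : S¹)) :
    ∀ (n : ℕ) (x : ℝ), (f ^ n) (x : S¹) = ((E^[n] x : ℝ) : S¹) := by
  intro n
  induction n with
  | zero =>
      intro x
      rw [pow_zero, Function.iterate_zero_apply]
      rfl
  | succ k ih =>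
      intro x
      rw [pow_succ, Function.iterate_succ_apply, mul_apply, hlift x, ih (E x)]

lemma inv_lift (f : S¹ ≃ₜ S¹) (E : ℝ ≃o ℝ)
    (hlift : ∀ x : ℝ, f (x : S¹) = ((E x : ℝ) : S¹)) :
    ∀ x : ℝ, f⁻¹ (x : S¹) = ((E.symm x : ℝ) : S¹) := by
  intro x
  have h : f ((E.symm x : ℝ) : S¹) = (x : S¹) := by
    rw [hlift, E.apply_symm_apply]
  calc f⁻¹ (x : S¹) = f⁻¹ (f ((E.symm x : ℝ) : S¹)) := by rw [h]
    _ = ((E.symm x : ℝ) : S¹) := inv_apply_apply f _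

/-- All nonzero powers of `f ^ Nf` map points over `ε`-far sets into the projected
`ε`-neighborhood of the fixed set of the lift. -/
lemma power_maps (f : S¹ ≃ₜ S¹) (E : ℝ ≃o ℝ)
    (hlift : ∀ x : ℝ, f (x : S¹) = ((E x : ℝ) : S¹)) {ε : ℝ}
    {Nf : ℕ} (hNf1 : 0 < Nf)
    (hNf : ∀ n, Nf ≤ n → ∀ x : ℝ, (∀ c, E c = c → ε ≤ |x - c|) →
      ((∃ c, E c = c ∧ |E^[n] x - c| < ε) ∧
       (∃ c, E c = c ∧ |(⇑E.symm)^[n] x - c| < ε)))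
    (Y : Set ℝ) (hY : ∀ y ∈ Y, ∀ c, E c = c → ε ≤ |y - c|) :
    ∀ k : ℤ, k ≠ 0 → ∀ z ∈ (fun x : ℝ => (x : S¹)) '' Y,
      ((f ^ Nf) ^ k) • z ∈
        (fun x : ℝ => (x : S¹)) '' {x : ℝ | ∃ c, E c = c ∧ |x - c| < ε} := by
  rintro k hk z ⟨y, hy, rfl⟩
  rcases lt_or_gt_of_ne hk with hneg | hpos
  · set n : ℕ := Nf * (-k).toNat with hn
    have hm1 : 1 ≤ (-k).toNat := by omega
    have hnNf : Nf ≤ n := by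
      calc Nf = Nf * 1 := (mul_one Nf).symm
        _ ≤ n := Nat.mul_le_mul_left Nf hm1
    have hkeq : ((f ^ Nf) ^ k) = (f⁻¹) ^ n := by
      have h1 : k = -(((-k).toNat : ℤ)) := by omega
      rw [h1, zpow_neg, zpow_natCast, ← pow_mul, inv_pow]
    obtain ⟨c, hc, hc'⟩ := (hNf n hnNf y (hY y hy)).2
    refine ⟨(⇑E.symm)^[n] y, ⟨c, hc, hc'⟩, ?_⟩
    rw [smul_def, hkeq]
    exact (pow_apply f⁻¹ E.symm (inv_lift f E hlift) n y).symm
  · set n : ℕ := Nf * k.toNat with hn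
    have hm1 : 1 ≤ k.toNat := by omega
    have hnNf : Nf ≤ n := by
      calc Nf = Nf * 1 := (mul_one Nf).symm
        _ ≤ n := Nat.mul_le_mul_left Nf hm1
    have hkeq : ((f ^ Nf) ^ k) = f ^ n := by
      have h1 : k = ((k.toNat : ℤ)) := by omega
      rw [h1, zpow_natCast, ← pow_mul]
    obtain ⟨c, hc, hc'⟩ := (hNf n hnNf y (hY y hy)).1
    refine ⟨E^[n] y, ⟨c, hc, hc'⟩, ?_⟩
    rw [smul_def, hkeq]
    exact (pow_apply f E hlift n y).symm

/-- Two disjoint closed `1`-periodic nonempty subsets of `ℝ` are uniformly separated. -/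
lemma separation {Cf Cg : Set ℝ} (hCfcl : IsClosed Cf) (hCgcl : IsClosed Cg)
    (hCfne : Cf.Nonempty) (hCgne : Cg.Nonempty)
    (hCfper : ∀ (m : ℤ) {c}, c ∈ Cf → c + m ∈ Cf)
    (hCgper : ∀ (m : ℤ) {c}, c ∈ Cg → c + m ∈ Cg)
    (hdisj : ∀ x ∈ Cf, x ∉ Cg) :
    ∃ δ > 0, ∀ x ∈ Cf, ∀ y ∈ Cg, δ ≤ |x - y| := by
  obtain ⟨x₀, hx₀⟩ := hCfne
  set Kf := Cf ∩ Set.Icc (0:ℝ) 1 with hKf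
  have hKne : Kf.Nonempty := by
    refine ⟨x₀ + ((-⌊x₀⌋ : ℤ) : ℝ), hCfper _ hx₀, ?_, ?_⟩
    · push_cast
      have := Int.floor_le x₀
      linarith
    · push_cast
      have := Int.lt_floor_add_one x₀
      linarith
  have hKcompact : IsCompact Kf :=
    isCompact_Icc.of_isClosed_subset (hCfcl.inter isClosed_Icc) Set.inter_subset_right
  obtain ⟨p, hpK, hpmin⟩ := hKcompact.exists_isMinOn hKne
    ((Metric.continuous_infDist_pt Cg).continuousOn)
  have hδpos : 0 < infDist p Cg :=
    (hCgcl.notMem_iff_infDist_pos hCgne).1 (hdisj p hpK.1)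
  refine ⟨infDist p Cg, hδpos, ?_⟩
  intro x hx y hy
  set m : ℤ := ⌊x⌋ with hm
  have hx' : x + ((-m : ℤ) : ℝ) ∈ Kf := by
    refine ⟨hCfper _ hx, ?_, ?_⟩
    · push_cast
      have := Int.floor_le x
      linarith
    · push_cast
      have := Int.lt_floor_add_one x
      linarith
  have hy' : y + ((-m : ℤ) : ℝ) ∈ Cg := hCgper _ hy
  calc infDist p Cg ≤ infDist (x + ((-m : ℤ) : ℝ)) Cg := hpmin hx'
    _ ≤ dist (x + ((-m : ℤ) : ℝ)) (y + ((-m : ℤ) : ℝ)) := infDist_le_dist_of_mem hy'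
    _ = |x - y| := by rw [Real.dist_eq]; ring_nf

/-- The key lemma: two elements of `G` with fixed points but no common fixed point
generate a free subgroup of rank two inside `G`. -/
lemma key (G : Subgroup (S¹ ≃ₜ S¹)) (f g : S¹ ≃ₜ S¹) (hfG : f ∈ G) (hgG : g ∈ G)
    (hof : OrientationPreserving f) (hog : OrientationPreserving g)
    (hffix : (FixSet f).Nonempty) (hgfix : (FixSet g).Nonempty)
    (hdisj : ∀ s, s ∈ FixSet f → s ∉ FixSet g) :
    HasFreeSubgroup G := by
  obtain ⟨E, hElift, hE1, hEfix⟩ := exists_nice_lift f hof hffix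
  obtain ⟨D, hDlift, hD1, hDfix⟩ := exists_nice_lift g hog hgfix
  set Cf : Set ℝ := {x | E x = x} with hCf
  set Cg : Set ℝ := {x | D x = x} with hCg
  have hprCf : ∀ {c : ℝ}, c ∈ Cf → f (c : S¹) = (c : S¹) := by
    intro c hc
    rw [hElift c, hc]
  have hprCg : ∀ {c : ℝ}, c ∈ Cg → g (c : S¹) = (c : S¹) := by
    intro c hc
    rw [hDlift c, hc]
  have hCfper : ∀ (m : ℤ) {c : ℝ}, c ∈ Cf → c + m ∈ Cf := by
    intro m c hc
    show E _ = _
    rw [map_add_int E hE1 m c, hc]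
  have hCgper : ∀ (m : ℤ) {c : ℝ}, c ∈ Cg → c + m ∈ Cg := by
    intro m c hc
    show D _ = _
    rw [map_add_int D hD1 m c, hc]
  have hCfCg : ∀ x ∈ Cf, x ∉ Cg := by
    intro x hx hx'
    exact hdisj ((x : ℝ) : S¹) (hprCf hx) (hprCg hx')
  obtain ⟨δ, hδ, hsep⟩ := separation (isClosed_eq (orderIso_continuous E) continuous_id)
    (isClosed_eq (orderIso_continuous D) continuous_id) hEfix hDfix hCfper hCgper hCfCg
  set ε : ℝ := δ / 2 with hε'
  have hε : 0 < ε := by simp only [hε']; linarith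
  obtain ⟨Nf, hNf1, hNf⟩ := core E hE1 hε hEfix
  obtain ⟨Ng, hNg1, hNg⟩ := core D hD1 hε hDfix
  set Vf : Set ℝ := {x | ∃ c, E c = c ∧ |x - c| < ε} with hVf
  set Vg : Set ℝ := {x | ∃ c, D c = c ∧ |x - c| < ε} with hVg
  have hVgfar : ∀ y ∈ Vg, ∀ c, E c = c → ε ≤ |y - c| := by
    rintro y ⟨cg, hcg, hy⟩ c hc
    have h1 := hsep c hc cg hcg
    have h2 : |c - cg| ≤ |c - y| + |y - cg| := abs_sub_le c y cg
    have h3 : |y - c| = |c - y| := abs_sub_comm y c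
    simp only [hε'] at *
    linarith
  have hVffar : ∀ y ∈ Vf, ∀ c, D c = c → ε ≤ |y - c| := by
    rintro y ⟨cf, hcf, hy⟩ c hc
    have h1 := hsep cf hcf c hc
    have h2 : |cf - c| ≤ |cf - y| + |y - c| := abs_sub_le cf y c
    have h3 : |cf - y| = |y - cf| := abs_sub_comm cf y
    simp only [hε'] at *
    linarith
  -- ping-pong data
  set X : Fin 2 → Set S¹ :=
    ![(fun x : ℝ => (x : S¹)) '' Vf, (fun x : ℝ => (x : S¹)) '' Vg] with hX
  have hXne : ∀ i, (X i).Nonempty := by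
    intro i
    fin_cases i
    · obtain ⟨c, hc⟩ := hEfix
      exact ⟨(c : S¹), ⟨c, ⟨c, hc, by simp [hε']; linarith⟩, rfl⟩⟩
    · obtain ⟨c, hc⟩ := hDfix
      exact ⟨(c : S¹), ⟨c, ⟨c, hc, by simp [hε']; linarith⟩, rfl⟩⟩
  have hXdisj01 : Disjoint (X 0) (X 1) := by
    rw [Set.disjoint_left]
    rintro z ⟨u, ⟨cf, hcf, hu⟩, rfl⟩ ⟨v, ⟨cg, hcg, hv⟩, hvu⟩
    obtain ⟨m, hmv⟩ := pr_eq_pr.mp hvu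
    -- u = v + m
    have hcg' : cg + m ∈ Cg := hCgper m hcg
    have h1 := hsep cf hcf (cg + m) hcg'
    have h2 : |u - (cg + m)| < ε := by
      rw [hmv]
      have he : v + (m:ℝ) - (cg + (m:ℝ)) = v - cg := by ring
      rw [he]
      exact hv
    have h3 : |cf - (cg + m)| ≤ |cf - u| + |u - (cg + m)| := abs_sub_le cf u (cg + m)
    have h4 : |cf - u| = |u - cf| := abs_sub_comm cf u
    simp only [hε'] at *
    linarith
  have hXdisj : Pairwise (Disjoint on X) := by
    intro i j hij
    fin_cases i <;> fin_cases j
    · exact absurd rfl hij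
    · exact hXdisj01
    · exact hXdisj01.symm
    · exact absurd rfl hij
  -- the two homomorphisms from `FreeGroup Unit`
  set a : S¹ ≃ₜ S¹ := f ^ Nf with ha
  set b : S¹ ≃ₜ S¹ := g ^ Ng with hb
  set fhom : Fin 2 → (FreeGroup Unit →* (S¹ ≃ₜ S¹)) :=
    ![FreeGroup.lift (fun _ => a), FreeGroup.lift (fun _ => b)] with hfhom
  have hX0 : X 0 = (fun x : ℝ => (x : S¹)) '' Vf := by simp [hX]
  have hX1 : X 1 = (fun x : ℝ => (x : S¹)) '' Vg := by simp [hX]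
  have hfhom0 : fhom 0 = FreeGroup.lift (fun _ => a) := by simp [hfhom]
  have hfhom1 : fhom 1 = FreeGroup.lift (fun _ => b) := by simp [hfhom]
  have hgen : ∀ h : FreeGroup Unit, ∃ k : ℤ, (FreeGroup.of ()) ^ k = h := by
    intro h
    have hmem : h ∈ Subgroup.closure {FreeGroup.of ()} := by
      induction h using FreeGroup.induction_on with
      | C1 => exact one_mem _
      | of x => exact Subgroup.subset_closure rfl
      | inv_of x ih => exact inv_mem ih
      | mul x y ihx ihy => exact mul_mem ihx ihy
    exact Subgroup.mem_closure_singleton.mp hmem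
  have h01 : ∀ h : FreeGroup Unit, h ≠ 1 → (fhom 0) h • X 1 ⊆ X 0 := by
    intro h hne
    obtain ⟨k, hk⟩ := hgen h
    have hk0 : k ≠ 0 := by
      rintro rfl
      rw [zpow_zero] at hk
      exact hne hk.symm
    have hmap : (fhom 0) h = a ^ k := by
      rw [← hk, map_zpow, hfhom0, FreeGroup.lift_apply_of]
    rintro z ⟨w, hw, rfl⟩
    rw [hmap, hX0]
    rw [hX1] at hw
    exact power_maps f E hElift hNf1 hNf Vg hVgfar k hk0 w hw
  have h10 : ∀ h : FreeGroup Unit, h ≠ 1 → (fhom 1) h • X 0 ⊆ X 1 := by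
    intro h hne
    obtain ⟨k, hk⟩ := hgen h
    have hk0 : k ≠ 0 := by
      rintro rfl
      rw [zpow_zero] at hk
      exact hne hk.symm
    have hmap : (fhom 1) h = b ^ k := by
      rw [← hk, map_zpow, hfhom1, FreeGroup.lift_apply_of]
    rintro z ⟨w, hw, rfl⟩
    rw [hmap, hX1]
    rw [hX0] at hw
    exact power_maps g D hDlift hNg1 hNg Vf hVffar k hk0 w hw
  have hpp : Pairwise fun i j => ∀ h : FreeGroup Unit, h ≠ 1 → (fhom i) h • X j ⊆ X i := by
    intro i j hij
    fin_cases i <;> fin_cases j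
    · exact absurd rfl hij
    · exact h01
    · exact h10
    · exact absurd rfl hij
  have h3card : (3 : Cardinal) ≤ Cardinal.mk (FreeGroup Unit) := by
    refine le_trans ?_ (Cardinal.aleph0_le_mk (FreeGroup Unit))
    exact_mod_cast (Cardinal.nat_lt_aleph0 3).le
  have hinj : Function.Injective (Monoid.CoprodI.lift fhom) :=
    Monoid.CoprodI.lift_injective_of_ping_pong fhom (Or.inr ⟨0, h3card⟩) X hXne hXdisj hpp
  set φ : FreeGroup (Fin 2) →* (S¹ ≃ₜ S¹) :=
    (Monoid.CoprodI.lift fhom).comp (freeGroupEquivCoprodI (ι := Fin 2)).toMonoidHom with hφ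
  have hφinj : Function.Injective φ := by
    have : ⇑φ = ⇑(Monoid.CoprodI.lift fhom) ∘ ⇑(freeGroupEquivCoprodI (ι := Fin 2)) := rfl
    rw [this]
    exact hinj.comp (MulEquiv.injective _)
  have hofi : ∀ i : Fin 2, φ (FreeGroup.of i) = fhom i (FreeGroup.of ()) := by
    intro i
    show (Monoid.CoprodI.lift fhom) (freeGroupEquivCoprodI (FreeGroup.of i)) = _
    simp [freeGroupEquivCoprodI]
  have hmemG : ∀ w, φ w ∈ G := by
    intro w
    induction w using FreeGroup.induction_on with
    | C1 => rw [map_one]; exact one_mem G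
    | of x =>
        show φ (FreeGroup.of x) ∈ G
        rw [hofi x]
        fin_cases x
        · show (fhom 0) (FreeGroup.of ()) ∈ G
          rw [hfhom0, FreeGroup.lift_apply_of]
          exact pow_mem hfG Nf
        · show (fhom 1) (FreeGroup.of ()) ∈ G
          rw [hfhom1, FreeGroup.lift_apply_of]
          exact pow_mem hgG Ng
    | inv_of x ih =>
        rw [map_inv]
        exact inv_mem ih
    | mul x y ihx ihy =>
        rw [map_mul]
        exact mul_mem ihx ihy
  exact ⟨φ, hφinj, hmemG⟩

end CircleProof

end Development

/-- If `G ≤ Homeo₊(S¹)` has no non-abelian free subgroup, then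
`G₀ = {g ∈ G | Fix g ≠ ∅}` is a subgroup, normal in `G`. -/
theorem stmt4 (G : Subgroup (S¹ ≃ₜ S¹)) (hG : ∀ g ∈ G, OrientationPreserving g)
    (hfree : ¬ HasFreeSubgroup G) :
    ∃ N : Subgroup (S¹ ≃ₜ S¹),
      (N : Set (S¹ ≃ₜ S¹)) = {g | g ∈ G ∧ (FixSet g).Nonempty} ∧
      ∀ g ∈ G, ∀ h ∈ N, g * h * g⁻¹ ∈ N := by
  classical
  refine ⟨⟨⟨⟨setOf (fun g : S¹ ≃ₜ S¹ => g ∈ G ∧ (FixSet g).Nonempty), ?_⟩, ?_⟩, ?_⟩, rfl, ?_⟩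
  · intro a b ha hb
    obtain ⟨haG, hafix⟩ := ha
    obtain ⟨hbG, hbfix⟩ := hb
    refine ⟨mul_mem haG hbG, ?_⟩
    by_cases hc : ∃ s, s ∈ FixSet a ∧ s ∈ FixSet b
    · obtain ⟨s, hsa, hsb⟩ := hc
      refine ⟨s, ?_⟩
      show (a * b) s = s
      rw [CircleProof.mul_apply, show b s = s from hsb, show a s = s from hsa]
    · exact absurd (CircleProof.key G a b haG hbG (hG a haG) (hG b hbG) hafix hbfix
        (fun s hs hs' => hc ⟨s, hs, hs'⟩)) hfree
  · exact ⟨one_mem G, ⟨((0:ℝ) : S¹), rfl⟩⟩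
  · intro x hx
    obtain ⟨hxG, s, hs⟩ := hx
    refine ⟨inv_mem hxG, ⟨s, ?_⟩⟩
    show x⁻¹ s = s
    calc x⁻¹ s = x⁻¹ (x s) := by rw [show x s = s from hs]
      _ = s := CircleProof.inv_apply_apply x s
  · intro g hgG h hh
    obtain ⟨hhG, s, hs⟩ := hh
    refine ⟨mul_mem (mul_mem hgG hhG) (inv_mem hgG), ⟨g s, ?_⟩⟩
    show (g * h * g⁻¹) (g s) = g s
    rw [CircleProof.mul_apply, CircleProof.mul_apply, CircleProof.inv_apply_apply,
      show h s = s from hs]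
end

section
/- Let f, g ∈ Homeo₊(S^1) with lifts F, G to ℝ (satisfying F(t+1)=F(t)+1, G(t+1)=G(t)+1) such that F(t) < G(t) for all t ∈ ℝ. Then there exists h ∈ Homeo₊(S^1) with rational rotation number and a lift H of h satisfying F(t) < H(t) < G(t) for all t. -/
open Function Set

lemma lift_continuous (f : S¹ ≃ₜ S¹) (F : CircleDeg1Lift) (hF : IsLift f F) :
    Continuous F := by
  rw [CircleDeg1Lift.continuous_iff_surjective]
  intro y
  obtain ⟨x, hx⟩ := Quotient.exists_rep (f.symm (y : S¹))
  have hx' : ((x : ℝ) : S¹) = f.symm (y : S¹) := hx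
  have h1 : f (x : S¹) = (y : S¹) := by rw [hx']; exact f.apply_symm_apply _
  have h2 : ((F x : ℝ) : S¹) = (y : S¹) := (hF x).symm.trans h1
  have h3 : F x - y ∈ AddSubgroup.zmultiples (1 : ℝ) :=
    (QuotientAddGroup.eq_iff_sub_mem).mp h2
  obtain ⟨k, hk⟩ := (AddSubgroup.mem_zmultiples_iff).mp h3
  have hk' : (k : ℝ) = F x - y := by rw [← hk]; simp
  refine ⟨x - k, ?_⟩
  rw [F.map_sub_int]
  linarith

lemma exists_nat_fract_gt {α : ℝ} (hα : Irrational α) {h : ℝ} (h0 : 0 < h) (h1 : h < 1) :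
    ∃ n : ℕ, 0 < n ∧ 1 - h < Int.fract ((n : ℝ) * α) ∧ Int.fract ((n : ℝ) * α) < 1 := by
  have hdense : Dense ((AddSubgroup.zmultiples (1:ℝ) ⊔ AddSubgroup.zmultiples α :
      AddSubgroup ℝ) : Set ℝ) := by
    rcases AddSubgroup.dense_or_cyclic (AddSubgroup.zmultiples (1:ℝ) ⊔ AddSubgroup.zmultiples α)
      with hd | ⟨a, ha⟩
    · exact hd
    · exfalso
      have h1m : (1:ℝ) ∈ (AddSubgroup.zmultiples (1:ℝ) ⊔ AddSubgroup.zmultiples α) :=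
        AddSubgroup.mem_sup_left (AddSubgroup.mem_zmultiples 1)
      have hαm : α ∈ (AddSubgroup.zmultiples (1:ℝ) ⊔ AddSubgroup.zmultiples α) :=
        AddSubgroup.mem_sup_right (AddSubgroup.mem_zmultiples α)
      rw [ha, AddSubgroup.mem_closure_singleton] at h1m hαm
      obtain ⟨m, hm⟩ := h1m
      obtain ⟨k, hk⟩ := hαm
      have hm' : (m : ℝ) * a = 1 := by rwa [zsmul_eq_mul] at hm
      have hk' : (k : ℝ) * a = α := by rwa [zsmul_eq_mul] at hk
      have hm0 : (m : ℝ) ≠ 0 := by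
        intro hz; rw [hz, zero_mul] at hm'; exact one_ne_zero hm'.symm
      have key : α * (m : ℝ) = (k : ℝ) := by
        rw [← hk', mul_assoc, mul_comm a, hm', mul_one]
      refine hα ⟨(k : ℚ) / (m : ℚ), ?_⟩
      push_cast
      rw [div_eq_iff hm0]
      linarith [key]
  obtain ⟨s, hsS, hs⟩ := hdense.exists_between h0
  obtain ⟨x, hx, y, hy, hxy⟩ := AddSubgroup.mem_sup.mp hsS
  obtain ⟨k, hk⟩ := (AddSubgroup.mem_zmultiples_iff).mp hx
  obtain ⟨m, hm⟩ := (AddSubgroup.mem_zmultiples_iff).mp hy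
  have hs_eq : (k : ℝ) + (m : ℝ) * α = s := by
    rw [← hxy, ← hk, ← hm, zsmul_eq_mul, zsmul_eq_mul, mul_one]
  have hmα : (m : ℝ) * α = s - k := by linarith
  have hs01 : Int.fract s = s := Int.fract_eq_self.mpr ⟨hs.1.le, hs.2.trans h1⟩
  have hm0 : m ≠ 0 := by
    rintro rfl
    rw [Int.cast_zero, zero_mul, add_zero] at hs_eq
    have hk0 : (0:ℝ) < (k:ℝ) := hs_eq ▸ hs.1
    have hk1 : (1:ℤ) ≤ k := by exact_mod_cast hk0
    have : (1:ℝ) ≤ (k:ℝ) := by exact_mod_cast hk1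
    linarith [hs.2]
  have hsne : Int.fract s ≠ 0 := fun hc => (ne_of_gt hs.1) (by rwa [hs01] at hc)
  rcases hm0.lt_or_gt with hneg | hpos
  · -- m < 0 : use n = (-m)
    have hnz : ((-m).toNat : ℤ) = -m := Int.toNat_of_nonneg (by omega)
    have hn : (((-m).toNat : ℕ) : ℝ) = -(m:ℝ) := by exact_mod_cast congrArg (Int.cast : ℤ → ℝ) hnz
    have heq : (((-m).toNat : ℕ) : ℝ) * α = -s + (k : ℝ) := by
      rw [hn, neg_mul, hmα]; ring
    have hfr : Int.fract ((((-m).toNat : ℕ) : ℝ) * α) = 1 - s := by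
      have : ((k:ℤ):ℝ) = (k:ℝ) := rfl
      rw [heq, ← this, Int.fract_add_intCast, Int.fract_neg hsne, hs01]
    exact ⟨(-m).toNat, by omega, by rw [hfr]; linarith [hs.2], by rw [hfr]; linarith [hs.1]⟩
  · -- m > 0 : fract (m α) = s, amplify
    set j : ℤ := ⌊(1 - h) / s⌋ + 1 with hj
    have hjpos : 0 < j := by
      have : (0:ℤ) ≤ ⌊(1 - h) / s⌋ := Int.floor_nonneg.mpr (div_nonneg (by linarith) hs.1.le)
      omega
    have hju : ((1 - h) / s) < (j : ℝ) := by
      rw [hj]; push_cast; exact Int.lt_floor_add_one _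
    have hjl : (j : ℝ) ≤ (1 - h) / s + 1 := by
      rw [hj]; push_cast
      have := Int.floor_le ((1 - h) / s)
      linarith
    have hjs_gt : 1 - h < (j : ℝ) * s := by
      have := (div_lt_iff₀ hs.1).mp hju
      linarith
    have hjs_lt : (j : ℝ) * s < 1 := by
      have h2 : (j : ℝ) * s ≤ ((1 - h) / s + 1) * s :=
        mul_le_mul_of_nonneg_right hjl hs.1.le
      have hds : (1 - h) / s * s = 1 - h := div_mul_cancel₀ _ (ne_of_gt hs.1)
      nlinarith [hs.2]
    have hjm : 0 < j * m := mul_pos hjpos hpos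
    have hnz : ((j * m).toNat : ℤ) = j * m := Int.toNat_of_nonneg (by omega)
    have hn : (((j * m).toNat : ℕ) : ℝ) = (j:ℝ) * (m:ℝ) := by
      have := congrArg (Int.cast : ℤ → ℝ) hnz
      push_cast at this
      exact_mod_cast this
    have heq : (((j * m).toNat : ℕ) : ℝ) * α = (j:ℝ) * s + ((-(j * k) : ℤ) : ℝ) := by
      rw [hn, mul_assoc, hmα]; push_cast; ring
    have hfr : Int.fract ((((j * m).toNat : ℕ) : ℝ) * α) = (j:ℝ) * s := by
      rw [heq, Int.fract_add_intCast, Int.fract_eq_self.mpr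
        ⟨mul_nonneg (by exact_mod_cast hjpos.le) hs.1.le, hjs_lt⟩]
    exact ⟨(j * m).toNat, by omega, by rw [hfr]; exact hjs_gt, by rw [hfr]; exact hjs_lt⟩

-- gap lemma
lemma exists_gap (F G : CircleDeg1Lift) (hFc : Continuous F) (hGc : Continuous G)
    (hlt : ∀ t, F t < G t) : ∃ ε > 0, ∀ t, F t + ε ≤ G t := by
  obtain ⟨t₀, ht₀m, ht₀⟩ := isCompact_Icc.exists_isMinOn (nonempty_Icc.2 zero_le_one)
    ((hGc.sub hFc).continuousOn : ContinuousOn (fun t => G t - F t) (Icc 0 1))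
  refine ⟨G t₀ - F t₀, sub_pos.2 (hlt t₀), fun t => ?_⟩
  have hmem : Int.fract t ∈ Icc (0:ℝ) 1 := ⟨Int.fract_nonneg t, (Int.fract_lt_one t).le⟩
  have hmin := (isMinOn_iff.mp ht₀) _ hmem
  have hfr : G (Int.fract t) - F (Int.fract t) = G t - F t := by
    unfold Int.fract
    rw [F.map_sub_int, G.map_sub_int]
    ring
  rw [Pi.sub_apply, Pi.sub_apply, hfr] at hmin
  linarith

/-- Between any two circle homeomorphisms whose lifts satisfy `F < G` pointwise, one can insert
a circle homeomorphism with rational rotation number. -/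
theorem stmt6 (f g : S¹ ≃ₜ S¹) (F G : CircleDeg1Lift) (hF : IsLift f F) (hG : IsLift g G)
    (hlt : ∀ t : ℝ, F t < G t) :
    ∃ (h : S¹ ≃ₜ S¹) (H : CircleDeg1Lift), IsLift h H ∧
      (∀ t : ℝ, F t < H t ∧ H t < G t) ∧
      ∃ q : ℚ, H.translationNumber = (q : ℝ) := by
  have hFcont : Continuous F := lift_continuous f F hF
  have hGcont : Continuous G := lift_continuous g G hG
  obtain ⟨ε, hε0, hε⟩ := exists_gap F G hFcont hGcont hlt
  set Hc : ℝ → CircleDeg1Lift :=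
    fun c => CircleDeg1Lift.translate (Multiplicative.ofAdd c) * F with hHcdef
  have hHc : ∀ c x, Hc c x = c + F x := fun c x => rfl
  have hHcont : ∀ c, Continuous (Hc c) := by
    intro c
    have : ⇑(Hc c) = fun x => c + F x := funext fun x => hHc c x
    rw [this]
    exact continuous_const.add hFcont
  -- generic finisher
  have main : ∀ c : ℝ, 0 < c → c < ε → (∃ q : ℚ, (Hc c).translationNumber = (q : ℝ)) →
      ∃ (h : S¹ ≃ₜ S¹) (H : CircleDeg1Lift), IsLift h H ∧
        (∀ t : ℝ, F t < H t ∧ H t < G t) ∧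
        ∃ q : ℚ, H.translationNumber = (q : ℝ) := by
    rintro c hc0 hcε hq
    refine ⟨f.trans (Homeomorph.addLeft ((c : ℝ) : S¹)), Hc c, ?_, ?_, hq⟩
    · intro x
      show (c : S¹) + f (x : S¹) = _
      rw [hF x, hHc, AddCircle.coe_add]
    · intro t
      have h1 := hHc c t
      constructor
      · rw [h1]; linarith
      · rw [h1]; linarith [hε t]
  set e : ℝ := min ε 1 with he
  have he0 : 0 < e := lt_min hε0 one_pos
  have he1 : e ≤ 1 := min_le_right _ _
  have heε : e ≤ ε := min_le_left _ _
  by_cases hq1 : ∃ q : ℚ, (Hc (e / 2)).translationNumber = (q : ℝ)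
  · exact main (e / 2) (by linarith) (by linarith) hq1
  set α : ℝ := (Hc (e / 2)).translationNumber with hα
  have hirr : Irrational α := by
    rintro ⟨q, hq⟩
    exact hq1 ⟨q, hq.symm⟩
  obtain ⟨q, hq0, hfr1, hfr2⟩ := exists_nat_fract_gt hirr
    (h := e / 4) (by linarith) (by linarith)
  set c1 : ℝ := e / 2 with hc1
  set c2 : ℝ := 3 * e / 4 with hc2
  -- point where (Hc c1)^q achieves its translation number
  obtain ⟨x₀, hx₀⟩ := CircleDeg1Lift.exists_eq_add_translationNumber ((Hc c1) ^ q)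
    (CircleDeg1Lift.continuous_pow _ (hHcont c1) q)
  have hτpow : ((Hc c1) ^ q).translationNumber = (q : ℝ) * α := by
    rw [CircleDeg1Lift.translationNumber_pow]
  rw [hτpow] at hx₀
  -- the function ψ
  set ψ : ℝ → ℝ := fun c => ((Hc c) ^ q) x₀ with hψdef
  have hψcont : Continuous ψ := by
    have key : ∀ n : ℕ, Continuous fun c => ((Hc c) ^ n) x₀ := by
      intro n
      induction n with
      | zero => simpa [pow_zero] using continuous_const
      | succ n ih =>
        have hrw : ∀ c : ℝ, ((Hc c) ^ (n + 1)) x₀ = c + F (((Hc c) ^ n) x₀) := by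
          intro c
          rw [pow_succ', CircleDeg1Lift.mul_apply, hHc]
        simp only [hrw]
        exact continuous_id.add (hFcont.comp ih)
    exact key q
  have hle12 : Hc c1 ≤ Hc c2 := by
    intro x
    rw [hHc, hHc]
    have : c1 ≤ c2 := by rw [hc1, hc2]; linarith
    linarith
  -- gap estimate: ψ c2 ≥ ψ c1 + (c2 - c1)
  have hgap : ψ c1 + (c2 - c1) ≤ ψ c2 := by
    obtain ⟨k, rfl⟩ : ∃ k, q = k + 1 := ⟨q - 1, by omega⟩
    have h1 : ((Hc c1) ^ (k + 1)) x₀ = c1 + F (((Hc c1) ^ k) x₀) := by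
      rw [pow_succ', CircleDeg1Lift.mul_apply, hHc]
    have h2 : ((Hc c2) ^ (k + 1)) x₀ = c2 + F (((Hc c2) ^ k) x₀) := by
      rw [pow_succ', CircleDeg1Lift.mul_apply, hHc]
    have h3 : ((Hc c1) ^ k) x₀ ≤ ((Hc c2) ^ k) x₀ := CircleDeg1Lift.pow_mono hle12 k x₀
    have h4 : F (((Hc c1) ^ k) x₀) ≤ F (((Hc c2) ^ k) x₀) := F.mono h3
    show ((Hc c1) ^ (k + 1)) x₀ + (c2 - c1) ≤ ((Hc c2) ^ (k + 1)) x₀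
    rw [h1, h2]
    linarith
  set p : ℤ := ⌊(q : ℝ) * α⌋ + 1 with hp
  have hp1 : (q : ℝ) * α < (p : ℝ) := by
    rw [hp]; push_cast; exact Int.lt_floor_add_one _
  have hp2 : (p : ℝ) ≤ (q : ℝ) * α + e / 4 := by
    have hfrd : Int.fract ((q : ℝ) * α) = (q : ℝ) * α - ⌊(q : ℝ) * α⌋ := rfl
    rw [hp]; push_cast
    rw [hfrd] at hfr1
    linarith
  have hψ1 : ψ c1 = x₀ + (q : ℝ) * α := hx₀
  have hmem : x₀ + (p : ℝ) ∈ Icc (ψ c1) (ψ c2) := by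
    constructor
    · rw [hψ1]; linarith
    · have h5 : c2 - c1 = e / 4 := by rw [hc1, hc2]; ring
      linarith [hgap, hψ1, hp2]
  have hc12 : c1 ≤ c2 := by rw [hc1, hc2]; linarith
  obtain ⟨c, hcmem, hcψ⟩ := intermediate_value_Icc hc12 hψcont.continuousOn hmem
  have hτc : (Hc c).translationNumber = (p : ℝ) / (q : ℝ) :=
    CircleDeg1Lift.translationNumber_of_map_pow_eq_add_int _ hcψ hq0
  refine main c ?_ ?_ ⟨(p : ℚ) / (q : ℚ), ?_⟩
  · have := hcmem.1; rw [hc1] at this; linarith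
  · have := hcmem.2; rw [hc2] at this; linarith
  · rw [hτc]; push_cast; ring
end

section
/- Let f, g ∈ Homeo₊(S^1) with equal irrational rotation numbers rot(f) = rot(g) ∉ ℚ/ℤ. Then f g⁻¹ has a fixed point in S^1. -/
open Function Set

namespace Stmt7Aux

open Int CircleDeg1Lift

local notation "τ" => CircleDeg1Lift.translationNumber

/-- Two reals project to the same point of `ℝ/ℤ` iff they differ by an integer. -/
lemma coe_eq_coe_iff {a b : ℝ} : (a : S¹) = (b : S¹) ↔ ∃ k : ℤ, a - b = k := by
  constructor
  · intro h
    have h2 : -a + b ∈ AddSubgroup.zmultiples (1 : ℝ) := QuotientAddGroup.eq.mp h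
    obtain ⟨k, hk⟩ := AddSubgroup.mem_zmultiples_iff.mp h2
    rw [zsmul_eq_mul, mul_one] at hk
    exact ⟨-k, by push_cast; linarith⟩
  · rintro ⟨k, hk⟩
    refine QuotientAddGroup.eq.mpr (AddSubgroup.mem_zmultiples_iff.mpr ⟨-k, ?_⟩)
    rw [zsmul_eq_mul, mul_one]
    push_cast
    linarith

/-- A lift of a circle homeomorphism is surjective, hence continuous. -/
lemma lift_continuous {f : S¹ ≃ₜ S¹} {F : CircleDeg1Lift} (hF : IsLift f F) :
    Continuous F := by
  apply F.monotone.continuous_of_surjective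
  intro y
  obtain ⟨x₀, hx₀⟩ : ∃ x₀ : ℝ, (x₀ : S¹) = f.symm (y : S¹) :=
    QuotientAddGroup.mk_surjective (f.symm (y : S¹))
  have h1 : f ((x₀ : ℝ) : S¹) = (y : S¹) := by rw [hx₀, Homeomorph.apply_symm_apply]
  have h2 : ((F x₀ : ℝ) : S¹) = (y : S¹) := by rw [← hF x₀, h1]
  obtain ⟨k, hk⟩ := coe_eq_coe_iff.mp h2
  refine ⟨x₀ + (-k : ℤ), ?_⟩
  rw [F.map_add_int]
  push_cast
  linarith

/-- Iterated comparison: if `B + c ≤ A` pointwise with `c ≥ 0`, then `Bⁿ + c ≤ Aⁿ`. -/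
lemma pow_le_pow_add {A B : CircleDeg1Lift} {c : ℝ} (hc : 0 ≤ c)
    (h : ∀ x, B x + c ≤ A x) : ∀ n x, (B ^ (n + 1)) x + c ≤ (A ^ (n + 1)) x := by
  intro n
  induction n with
  | zero => simpa using h
  | succ n ih =>
    intro x
    have hA : (A ^ (n + 2)) x = A ((A ^ (n + 1)) x) := by
      rw [pow_succ']; rfl
    have hB : (B ^ (n + 2)) x = B ((B ^ (n + 1)) x) := by
      rw [pow_succ']; rfl
    have h1 : (B ^ (n + 1)) x ≤ (A ^ (n + 1)) x := by linarith [ih x]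
    calc (B ^ (n + 2)) x + c = B ((B ^ (n + 1)) x) + c := by rw [hB]
      _ ≤ B ((A ^ (n + 1)) x) + c := add_le_add_left (B.mono h1) c
      _ ≤ A ((A ^ (n + 1)) x) := h _
      _ = (A ^ (n + 2)) x := (hA).symm

lemma fract_pos_of_irrational {x : ℝ} (h : Irrational x) : 0 < Int.fract x := by
  rcases (Int.fract_nonneg x).lt_or_eq with h1 | h1
  · exact h1
  · exfalso
    have : x = (⌊x⌋ : ℝ) := by
      have := Int.self_sub_floor x
      rw [← h1] at this
      linarith
    exact h.ne_int ⌊x⌋ this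

/-- For irrational `α` and `0 < s ≤ 1`, some positive multiple of `α` has fractional part
either `< s` or `> 1 - s`. -/
lemma exists_nat_fract_mem {α : ℝ} (hα : Irrational α) {s : ℝ} (hs : 0 < s) (hs1 : s ≤ 1) :
    ∃ n : ℕ, 0 < n ∧ (Int.fract ((n : ℝ) * α) < s ∨ 1 - s < Int.fract ((n : ℝ) * α)) := by
  set S := AddSubgroup.closure ({1, α} : Set ℝ) with hS
  have hdense : Dense (S : Set ℝ) := by
    rcases S.dense_or_cyclic with h | ⟨a, ha⟩
    · exact h
    · exfalso
      have h1 : (1 : ℝ) ∈ S := AddSubgroup.subset_closure (by simp)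
      have hα' : α ∈ S := AddSubgroup.subset_closure (by simp)
      rw [ha] at h1 hα'
      obtain ⟨p, hp⟩ := AddSubgroup.mem_closure_singleton.mp h1
      obtain ⟨q, hq⟩ := AddSubgroup.mem_closure_singleton.mp hα'
      rw [zsmul_eq_mul] at hp hq
      have hp0 : (p : ℝ) ≠ 0 := by
        intro h0
        rw [h0, zero_mul] at hp
        norm_num at hp
      apply hα
      refine ⟨(q : ℚ) / (p : ℚ), ?_⟩
      have ha0 : a = 1 / (p : ℝ) := by field_simp; linarith
      rw [ha0] at hq
      push_cast
      rw [← hq]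
      ring
  obtain ⟨x, hxS, hx⟩ := hdense.exists_between (show (0:ℝ) < s from hs)
  obtain ⟨hx0, hxs⟩ := hx
  have hx1 : x < 1 := lt_of_lt_of_le hxs hs1
  obtain ⟨mz, nz, hmn⟩ := AddSubgroup.mem_closure_pair.mp hxS
  rw [zsmul_eq_mul, zsmul_eq_mul, mul_one] at hmn
  have hnz : nz ≠ 0 := by
    rintro rfl
    rw [Int.cast_zero, zero_mul, add_zero] at hmn
    have h1 : (0:ℝ) < (mz:ℝ) := hmn ▸ hx0
    have h2 : (mz:ℝ) < 1 := hmn ▸ hx1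
    have h1' : 0 < mz := by exact_mod_cast h1
    have h2' : mz < 1 := by exact_mod_cast h2
    omega
  rcases hnz.lt_or_gt with hneg | hpos
  · refine ⟨(-nz).toNat, by omega, Or.inr ?_⟩
    have hcast : (((-nz).toNat : ℤ) : ℝ) = -(nz : ℝ) := by
      rw [Int.toNat_of_nonneg (by omega)]; push_cast; ring
    have hval : ((((-nz).toNat : ℕ) : ℝ)) * α = (mz : ℝ) - x := by
      have : (((-nz).toNat : ℕ) : ℝ) = (((-nz).toNat : ℤ) : ℝ) := by push_cast; ring
      rw [this, hcast]; linarith [hmn]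
    rw [hval]
    have : Int.fract ((mz : ℝ) - x) = Int.fract (-x) := by
      rw [sub_eq_neg_add, Int.fract_add_intCast]
    rw [this, Int.fract_neg (by rw [Int.fract_eq_self.mpr ⟨hx0.le, hx1⟩]; exact hx0.ne'),
      Int.fract_eq_self.mpr ⟨hx0.le, hx1⟩]
    linarith
  · refine ⟨nz.toNat, by omega, Or.inl ?_⟩
    have hval : (((nz.toNat : ℕ) : ℝ)) * α = x - (mz : ℝ) := by
      have : ((nz.toNat : ℕ) : ℝ) = ((nz : ℤ) : ℝ) := by
        rw [← Int.cast_natCast, Int.toNat_of_nonneg hpos.le]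
      rw [this]; linarith [hmn]
    rw [hval, Int.fract_sub_intCast, Int.fract_eq_self.mpr ⟨hx0.le, hx1⟩]
    exact hxs

lemma jtrick {δ s : ℝ} (h0 : 0 < δ) (hδs : δ < s) (hs1 : s ≤ 1) :
    ∃ j : ℕ, 0 < j ∧ 1 - s < (j : ℝ) * δ ∧ (j : ℝ) * δ < 1 := by
  classical
  have hex : ∃ j : ℕ, 1 - s < (j : ℝ) * δ := by
    obtain ⟨j, hj⟩ := exists_nat_gt ((1 - s) / δ)
    exact ⟨j, by rwa [div_lt_iff₀ h0] at hj⟩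
  let j := Nat.find hex
  have hj : 1 - s < (j : ℝ) * δ := Nat.find_spec hex
  have hjpos : 0 < j := by
    by_contra h
    have hj0 : j = 0 := by omega
    rw [hj0] at hj
    simp at hj
    linarith
  have hprev : ¬(1 - s < ((j - 1 : ℕ) : ℝ) * δ) := Nat.find_min hex (by omega)
  push_neg at hprev
  have hc : ((j - 1 : ℕ) : ℝ) = (j : ℝ) - 1 := by
    have : (1:ℕ) ≤ j := hjpos
    push_cast [Nat.cast_sub this]
    ring
  rw [hc] at hprev
  refine ⟨j, hjpos, hj, ?_⟩
  nlinarith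

lemma exists_fract_gt {α : ℝ} (hα : Irrational α) {s : ℝ} (hs : 0 < s) (hs1 : s ≤ 1) :
    ∃ n : ℕ, 0 < n ∧ 1 - s < Int.fract ((n : ℝ) * α) := by
  obtain ⟨n₀, hn₀, hcase⟩ := exists_nat_fract_mem hα hs hs1
  rcases hcase with hlt | hgt
  · have hirr' : Irrational ((n₀ : ℝ) * α) := hα.natCast_mul hn₀.ne'
    have hδ0 : 0 < Int.fract ((n₀ : ℝ) * α) := fract_pos_of_irrational hirr'
    obtain ⟨j, hj0, hj1, hj2⟩ := jtrick hδ0 hlt hs1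
    refine ⟨j * n₀, by positivity, ?_⟩
    have key : Int.fract (((j * n₀ : ℕ) : ℝ) * α) = (j : ℝ) * Int.fract ((n₀ : ℝ) * α) := by
      have h3 := Int.floor_add_fract ((n₀ : ℝ) * α)
      have h2 : ((j * n₀ : ℕ) : ℝ) * α
          = (j : ℝ) * Int.fract ((n₀ : ℝ) * α) + ((j : ℤ) * ⌊(n₀ : ℝ) * α⌋ : ℤ) := by
        push_cast
        nlinarith [h3]
      rw [h2, Int.fract_add_intCast, Int.fract_eq_self.mpr ⟨by positivity, hj2⟩]
    rw [key]
    exact hj1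
  · exact ⟨n₀, hn₀, hgt⟩

lemma exists_fract_lt {α : ℝ} (hα : Irrational α) {s : ℝ} (hs : 0 < s) (hs1 : s ≤ 1) :
    ∃ n : ℕ, 0 < n ∧ Int.fract ((n : ℝ) * α) < s := by
  obtain ⟨n₀, hn₀, hcase⟩ := exists_nat_fract_mem hα hs hs1
  rcases hcase with hlt | hgt
  · exact ⟨n₀, hn₀, hlt⟩
  · have hirr' : Irrational ((n₀ : ℝ) * α) := hα.natCast_mul hn₀.ne'
    set δ := 1 - Int.fract ((n₀ : ℝ) * α) with hδ
    have hδ0 : 0 < δ := by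
      have := Int.fract_lt_one ((n₀ : ℝ) * α)
      simp only [hδ]
      linarith
    have hδs : δ < s := by simp only [hδ]; linarith
    obtain ⟨j, hj0, hj1, hj2⟩ := jtrick hδ0 hδs hs1
    refine ⟨j * n₀, by positivity, ?_⟩
    have hjδ : Int.fract ((j : ℝ) * δ) = (j : ℝ) * δ :=
      Int.fract_eq_self.mpr ⟨by positivity, hj2⟩
    have key : Int.fract (((j * n₀ : ℕ) : ℝ) * α) = 1 - (j : ℝ) * δ := by
      have h3 := Int.floor_add_fract ((n₀ : ℝ) * α)
      have h2 : ((j * n₀ : ℕ) : ℝ) * α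
          = -((j : ℝ) * δ) + ((j : ℤ) * ⌊(n₀ : ℝ) * α⌋ + j : ℤ) := by
        push_cast
        simp only [hδ]
        nlinarith [h3]
      rw [h2, Int.fract_add_intCast, Int.fract_neg (by rw [hjδ]; positivity), hjδ]
    rw [key]
    have hlow : 1 - s < (j:ℝ) * δ := hj1
    linarith

end Stmt7Aux

open Stmt7Aux CircleDeg1Lift

/-- Two orientation-preserving circle homeomorphisms with the same irrational rotation number
differ by an element with a fixed point. -/
theorem stmt7 (f g : S¹ ≃ₜ S¹) (hf : OrientationPreserving f) (hg : OrientationPreserving g)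
    (heq : rot f = rot g) (hirr : ∀ q : ℚ, rot f ≠ ((q : ℝ) : S¹)) :
    (FixSet (f * g⁻¹)).Nonempty := by
  classical
  by_contra hemp
  rw [Set.not_nonempty_iff_eq_empty] at hemp
  set F : CircleDeg1Lift := hf.choose with hFdef
  have hF : IsLift f F := hf.choose_spec
  set G : CircleDeg1Lift := hg.choose with hGdef
  have hG : IsLift g G := hg.choose_spec
  have hrotf : rot f = ((F.translationNumber : ℝ) : S¹) := by
    rw [rot, dif_pos hf]
  have hrotg : rot g = ((G.translationNumber : ℝ) : S¹) := by
    rw [rot, dif_pos hg]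
  -- irrationality of the translation number
  have hirrα : Irrational F.translationNumber := by
    rw [Irrational]
    intro hmem
    obtain ⟨q, hq⟩ := hmem
    exact hirr q (by rw [hrotf, hq])
  -- equal rotation numbers: translation numbers differ by an integer
  obtain ⟨k, hk⟩ : ∃ k : ℤ, F.translationNumber - G.translationNumber = k := by
    apply coe_eq_coe_iff.mp
    rw [← hrotf, ← hrotg]; exact heq
  -- no fixed point: f t ≠ g t for all t
  have hne_circle : ∀ t : S¹, f t ≠ g t := by
    intro t ht
    have : (f * g⁻¹) (g t) = g t := by
      show f (g.symm (g t)) = g t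
      rw [g.symm_apply_apply, ht]
    have : g t ∈ FixSet (f * g⁻¹) := this
    rw [hemp] at this
    exact this
  have hcF : Continuous F := lift_continuous hF
  have hcG : Continuous G := lift_continuous hG
  set d : ℝ → ℝ := fun x => F x - G x with hd_def
  have hd_cont : Continuous d := hcF.sub hcG
  have hd_ne : ∀ (x : ℝ) (j : ℤ), d x ≠ (j : ℝ) := by
    intro x j hj
    apply hne_circle ((x : ℝ) : S¹)
    rw [hF x, hG x]
    exact coe_eq_coe_iff.mpr ⟨j, hj⟩
  have hd_per : ∀ (x : ℝ) (j : ℤ), d (x + j) = d x := by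
    intro x j
    simp only [hd_def, F.map_add_int, G.map_add_int]
    ring
  set m : ℤ := ⌊d 0⌋ with hm_def
  have h0m : (m : ℝ) < d 0 := (Int.floor_le (d 0)).lt_of_ne fun h => hd_ne 0 m h.symm
  have h0M : d 0 < (m : ℝ) + 1 := Int.lt_floor_add_one (d 0)
  -- all values of d lie strictly between m and m+1
  have hlow : ∀ x, (m : ℝ) < d x := by
    intro x
    by_contra hx
    push_neg at hx
    have hx' : d x < (m : ℝ) := hx.lt_of_ne (hd_ne x m)
    have hmem : (m : ℝ) ∈ Set.uIcc (d x) (d 0) :=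
      Set.mem_uIcc.mpr (Or.inl ⟨hx'.le, h0m.le⟩)
    obtain ⟨y, _, hy⟩ := intermediate_value_uIcc (hd_cont.continuousOn) hmem
    exact hd_ne y m hy
  have hhigh : ∀ x, d x < (m : ℝ) + 1 := by
    intro x
    by_contra hx
    push_neg at hx
    have hx' : (m : ℝ) + 1 < d x := hx.lt_of_ne' (by
      intro h
      have := hd_ne x (m + 1)
      apply this
      push_cast
      linarith)
    have hmem : (m : ℝ) + 1 ∈ Set.uIcc (d 0) (d x) :=
      Set.mem_uIcc.mpr (Or.inl ⟨h0M.le, hx'.le⟩)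
    obtain ⟨y, _, hy⟩ := intermediate_value_uIcc (hd_cont.continuousOn) hmem
    apply hd_ne y (m + 1)
    rw [hy]; push_cast; ring
  -- min and max of d on a period
  obtain ⟨x₀, _, hx₀⟩ := isCompact_Icc.exists_isMinOn (α := ℝ)
    (Set.nonempty_Icc.mpr zero_le_one) hd_cont.continuousOn
  obtain ⟨x₁, _, hx₁⟩ := isCompact_Icc.exists_isMaxOn (α := ℝ)
    (Set.nonempty_Icc.mpr zero_le_one) hd_cont.continuousOn
  have hmin : ∀ x, d x₀ ≤ d x := by
    intro x
    have h1 : d x = d (Int.fract x) := by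
      rw [← hd_per (Int.fract x) ⌊x⌋, Int.fract_add_floor]
    rw [h1]
    exact hx₀ ⟨Int.fract_nonneg x, (Int.fract_lt_one x).le⟩
  have hmax : ∀ x, d x ≤ d x₁ := by
    intro x
    have h1 : d x = d (Int.fract x) := by
      rw [← hd_per (Int.fract x) ⌊x⌋, Int.fract_add_floor]
    rw [h1]
    exact hx₁ ⟨Int.fract_nonneg x, (Int.fract_lt_one x).le⟩
  set s : ℝ := min (d x₀ - m) ((m : ℝ) + 1 - d x₁) with hs_def
  have hs : 0 < s := lt_min (by linarith [hlow x₀]) (by linarith [hhigh x₁])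
  have hs1 : s ≤ 1 := by
    have h1 : s ≤ d x₀ - m := min_le_left _ _
    have h2 : d x₀ ≤ d 0 := hmin 0
    linarith
  have hlb : ∀ x, (m : ℝ) + s ≤ d x := by
    intro x
    have := hmin x
    have h1 : s ≤ d x₀ - m := min_le_left _ _
    linarith
  have hub : ∀ x, d x ≤ (m : ℝ) + 1 - s := by
    intro x
    have := hmax x
    have h2 : s ≤ (m : ℝ) + 1 - d x₁ := min_le_right _ _
    linarith
  -- the integer-translated lifts of g
  set T : CircleDeg1Lift :=
    ((translate (Multiplicative.ofAdd ((m : ℤ) : ℝ)) : CircleDeg1Liftˣ) : CircleDeg1Lift)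
    with hT_def
  set T' : CircleDeg1Lift :=
    ((translate (Multiplicative.ofAdd (((m + 1 : ℤ)) : ℝ)) : CircleDeg1Liftˣ) : CircleDeg1Lift)
    with hT'_def
  have hT_apply : ∀ y, T y = (m : ℝ) + y := fun y => translate_apply _ y
  have hT'_apply : ∀ y, T' y = ((m + 1 : ℤ) : ℝ) + y := fun y => translate_apply _ y
  set G' : CircleDeg1Lift := T * G with hG'_def
  set G'' : CircleDeg1Lift := T' * G with hG''_def
  have hG'_apply : ∀ x, G' x = (m : ℝ) + G x := by
    intro x; rw [hG'_def, CircleDeg1Lift.mul_apply, hT_apply]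
  have hG''_apply : ∀ x, G'' x = ((m : ℝ) + 1) + G x := by
    intro x; rw [hG''_def, CircleDeg1Lift.mul_apply, hT'_apply]; push_cast; ring
  have hcommT : Commute T G := by
    apply CircleDeg1Lift.ext
    intro x
    show T (G x) = G (T x)
    rw [hT_apply, hT_apply, add_comm ((m : ℤ) : ℝ) x, G.map_add_int x m, add_comm]
  have hcommT' : Commute T' G := by
    apply CircleDeg1Lift.ext
    intro x
    show T' (G x) = G (T' x)
    rw [hT'_apply, hT'_apply, add_comm (((m + 1 : ℤ)) : ℝ) x, G.map_add_int x (m + 1), add_comm]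
  have hτT : T.translationNumber = (m : ℝ) := translationNumber_translate _
  have hτT' : T'.translationNumber = ((m + 1 : ℤ) : ℝ) := translationNumber_translate _
  have hτG' : G'.translationNumber = (m : ℝ) + G.translationNumber := by
    rw [hG'_def, translationNumber_mul_of_commute hcommT, hτT]
  have hτG'' : G''.translationNumber = ((m : ℝ) + 1) + G.translationNumber := by
    rw [hG''_def, translationNumber_mul_of_commute hcommT', hτT']; push_cast; ring
  -- the integer k is m or m + 1
  have hkm : (m : ℝ) ≤ (k : ℝ) := by
    have hle : G' ≤ F := by
      intro x
      have := hlb x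
      rw [hG'_apply x]
      simp only [hd_def] at this
      linarith [hs]
    have := translationNumber_mono hle
    rw [hτG'] at this
    linarith [hk]
  have hkm1 : (k : ℝ) ≤ (m : ℝ) + 1 := by
    have hle : F ≤ G'' := by
      intro x
      have := hub x
      rw [hG''_apply x]
      simp only [hd_def] at this
      linarith [hs]
    have := translationNumber_mono hle
    rw [hτG''] at this
    linarith [hk]
  have hkcases : k = m ∨ k = m + 1 := by
    have h1 : m ≤ k := by exact_mod_cast hkm
    have h2 : k ≤ m + 1 := by exact_mod_cast hkm1
    omega
  set α : ℝ := F.translationNumber with hα_def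
  rcases hkcases with hkm' | hkm' 
  · -- Case k = m : τ G' = α, and G' + s ≤ F
    have hτG'α : G'.translationNumber = α := by
      rw [hτG']
      have : (k : ℝ) = (m : ℝ) := by exact_mod_cast hkm'
      linarith [hk]
    have hpt : ∀ x, G' x + s ≤ F x := by
      intro x
      have := hlb x
      rw [hG'_apply x]
      simp only [hd_def] at this
      linarith
    have hall : ∀ N : ℕ, 0 < N → Int.fract ((N : ℝ) * α) ≤ 1 - s := by
      intro N hN
      obtain ⟨n, rfl⟩ : ∃ n, N = n + 1 := ⟨N - 1, by omega⟩
      set β : ℝ := ((n + 1 : ℕ) : ℝ) * α with hβ_def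
      have hτFn : (F ^ (n + 1)).translationNumber = β := by
        rw [translationNumber_pow]
      have hup : ∀ x, (F ^ (n + 1)) x < x + ((⌊β⌋ + 1 : ℤ) : ℝ) := by
        intro x
        apply map_lt_of_translationNumber_lt_int
        rw [hτFn]
        exact_mod_cast Int.lt_floor_add_one β
      have hGle : ∀ x, (G' ^ (n + 1)) x ≤ x + (((⌊β⌋ : ℝ) + 1) - s) := by
        intro x
        have h1 := pow_le_pow_add hs.le hpt n x
        have h2 := hup x
        push_cast at h2 ⊢
        linarith
      have := translationNumber_le_of_le_add (G' ^ (n + 1)) hGle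
      rw [translationNumber_pow, hτG'α] at this
      have hfr : Int.fract β = β - ⌊β⌋ := (Int.self_sub_floor β).symm
      rw [hfr]
      linarith
    obtain ⟨N, hN, hNgt⟩ := exists_fract_gt hirrα hs hs1
    have := hall N hN
    linarith
  · -- Case k = m + 1 : τ G'' = α, and F + s ≤ G''
    have hτG''α : G''.translationNumber = α := by
      rw [hτG'']
      have : (k : ℝ) = (m : ℝ) + 1 := by
        rw [hkm']; push_cast; ring
      linarith [hk]
    have hpt : ∀ x, F x + s ≤ G'' x := by
      intro x
      have := hub x
      rw [hG''_apply x]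
      simp only [hd_def] at this
      linarith
    have hall : ∀ N : ℕ, 0 < N → s ≤ Int.fract ((N : ℝ) * α) := by
      intro N hN
      obtain ⟨n, rfl⟩ : ∃ n, N = n + 1 := ⟨N - 1, by omega⟩
      set β : ℝ := ((n + 1 : ℕ) : ℝ) * α with hβ_def
      have hβirr : Irrational β := hirrα.natCast_mul (Nat.succ_ne_zero n)
      have hτFn : (F ^ (n + 1)).translationNumber = β := by
        rw [translationNumber_pow]
      have hlo : ∀ x, x + ((⌊β⌋ : ℤ) : ℝ) < (F ^ (n + 1)) x := by
        intro x
        apply lt_map_of_int_lt_translationNumber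
        rw [hτFn]
        exact (Int.floor_le β).lt_of_ne fun h => hβirr.ne_int ⌊β⌋ h.symm
      have hGge : ∀ x, x + ((⌊β⌋ : ℝ) + s) ≤ (G'' ^ (n + 1)) x := by
        intro x
        have h1 := pow_le_pow_add hs.le hpt n x
        have h2 := hlo x
        push_cast at h2 ⊢
        linarith
      have := le_translationNumber_of_add_le (G'' ^ (n + 1)) hGge
      rw [translationNumber_pow, hτG''α] at this
      have hfr : Int.fract β = β - ⌊β⌋ := (Int.self_sub_floor β).symm
      rw [hfr]
      linarith
    obtain ⟨N, hN, hNlt⟩ := exists_fract_lt hirrα hs hs1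
    have := hall N hN
    linarith
end

section
/- Let G ≤ Homeo₊(S^1) contain no non-abelian free subgroup, and let f, g ∈ G with rot(f) = rot(g) = p/q ∈ ℚ/ℤ. Then f g⁻¹ has a fixed point. -/
open Function Set

section Aux
open Metric Filter Topology



lemma mapsIoo {L : ℝ → ℝ} (hsm : StrictMono L) {l r : ℝ} (hfl : L l = l) (hfr : L r = r)
    {t : ℝ} (ht : t ∈ Ioo l r) : L t ∈ Ioo l r :=
  ⟨hfl ▸ hsm ht.1, hfr ▸ hsm ht.2⟩

lemma iter_mapsIoo {L : ℝ → ℝ} (hsm : StrictMono L) {l r : ℝ} (hfl : L l = l) (hfr : L r = r)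
    {t : ℝ} (ht : t ∈ Ioo l r) : ∀ n : ℕ, L^[n] t ∈ Ioo l r := by
  intro n
  induction n with
  | zero => simpa using ht
  | succ n ih => rw [Function.iterate_succ_apply']; exact mapsIoo hsm hfl hfr ih

lemma tendsto_iterate_of_lt {L : ℝ → ℝ} (hc : Continuous L) (hsm : StrictMono L)
    {l r : ℝ} (hfl : L l = l) (hfr : L r = r)
    (hgt : ∀ t ∈ Ioo l r, t < L t) {t : ℝ} (ht : t ∈ Ioo l r) :
    Tendsto (fun n => L^[n] t) atTop (𝓝 r) := by
  have hstay : ∀ n, L^[n] t ∈ Ioo l r := iter_mapsIoo hsm hfl hfr ht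
  have hmono : Monotone fun n => L^[n] t := monotone_nat_of_le_succ fun n => by
    rw [Function.iterate_succ_apply']
    exact (hgt _ (hstay n)).le
  have hbdd : BddAbove (range fun n => L^[n] t) := ⟨r, by rintro _ ⟨n, rfl⟩; exact (hstay n).2.le⟩
  have htd := tendsto_atTop_ciSup hmono hbdd
  set c := ⨆ n, L^[n] t with hcdef
  have hcr : c ≤ r := ciSup_le fun n => (hstay n).2.le
  have hlc : l < c := lt_of_lt_of_le ht.1 (le_ciSup hbdd 0)
  have hfix : L c = c := by
    have h1 : Tendsto (fun n => L^[n + 1] t) atTop (𝓝 c) := htd.comp (tendsto_add_atTop_nat 1)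
    have h2 : Tendsto (fun n => L (L^[n] t)) atTop (𝓝 (L c)) := (hc.tendsto c).comp htd
    have he : (fun n => L^[n + 1] t) = fun n => L (L^[n] t) := by
      funext n; rw [Function.iterate_succ_apply']
    rw [he] at h1
    exact tendsto_nhds_unique h2 h1
  rcases eq_or_lt_of_le hcr with h | h
  · rwa [h] at htd
  · exact absurd hfix (ne_of_gt (hgt c ⟨hlc, h⟩))

lemma tendsto_iterate_of_gt {L : ℝ → ℝ} (hc : Continuous L) (hsm : StrictMono L)
    {l r : ℝ} (hfl : L l = l) (hfr : L r = r)
    (hlt : ∀ t ∈ Ioo l r, L t < t) {t : ℝ} (ht : t ∈ Ioo l r) :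
    Tendsto (fun n => L^[n] t) atTop (𝓝 l) := by
  set M : ℝ → ℝ := fun x => -L (-x) with hM
  have hMc : Continuous M := (hc.comp continuous_neg).neg
  have hMsm : StrictMono M := fun p q hpq => neg_lt_neg (hsm (neg_lt_neg hpq))
  have hMfl : M (-r) = -r := by simp [hM, hfr]
  have hMfr : M (-l) = -l := by simp [hM, hfl]
  have hMgt : ∀ u ∈ Ioo (-r) (-l), u < M u := by
    intro u hu
    have hu' : -u ∈ Ioo l r := ⟨by linarith [hu.2], by linarith [hu.1]⟩
    have := hlt (-u) hu'
    simp only [hM]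
    linarith
  have hMt : -t ∈ Ioo (-r) (-l) := ⟨neg_lt_neg ht.2, neg_lt_neg ht.1⟩
  have hiter : ∀ (n : ℕ) (x : ℝ), M^[n] x = -L^[n] (-x) := by
    intro n
    induction n with
    | zero => intro x; simp
    | succ n ih =>
      intro x
      rw [Function.iterate_succ_apply, Function.iterate_succ_apply, ih]
      simp [hM]
  have h1 := tendsto_iterate_of_lt hMc hMsm hMfl hMfr hMgt hMt
  have h2 : Tendsto (fun n => -(L^[n] t)) atTop (𝓝 (-l)) := by
    convert h1 using 2 with n
    rw [hiter]; simp
  simpa using h2.neg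

lemma sign_const {L : ℝ → ℝ} (hc : Continuous L) {l r : ℝ}
    (hnofix : ∀ t ∈ Ioo l r, L t ≠ t) :
    (∀ t ∈ Ioo l r, t < L t) ∨ (∀ t ∈ Ioo l r, L t < t) := by
  by_contra hcon
  push_neg at hcon
  obtain ⟨⟨t₁, ht₁, ht₁'⟩, ⟨t₂, ht₂, ht₂'⟩⟩ := hcon
  have h1 : L t₁ < t₁ := lt_of_le_of_ne ht₁' (hnofix t₁ ht₁)
  have h2 : t₂ < L t₂ := lt_of_le_of_ne ht₂' fun h => hnofix t₂ ht₂ h.symm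
  have hD : Continuous fun x => L x - x := hc.sub continuous_id
  have hmem : (0:ℝ) ∈ uIcc (L t₁ - t₁) (L t₂ - t₂) := by
    rw [Set.mem_uIcc]; left; constructor <;> linarith
  obtain ⟨u, hu_mem, hu⟩ := intermediate_value_uIcc hD.continuousOn hmem
  have hu' : u ∈ Ioo l r := by
    rcases Set.mem_uIcc.mp hu_mem with h | h
    · exact ⟨lt_of_lt_of_le ht₁.1 h.1, lt_of_le_of_lt h.2 ht₂.2⟩
    · exact ⟨lt_of_lt_of_le ht₂.1 h.1, lt_of_le_of_lt h.2 ht₁.2⟩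
  have hu2 : L u - u = 0 := hu
  exact hnofix u hu' (by linarith)

lemma map_add_int' {L : ℝ → ℝ} (hper1 : ∀ x, L (x + 1) = L x + 1) (k : ℤ) (y : ℝ) :
    L (y + k) = L y + k := by
  induction k using Int.induction_on with
  | zero => simp
  | succ n ih =>
    push_cast at ih ⊢
    rw [show y + ((n:ℝ) + 1) = y + (n:ℝ) + 1 by ring, hper1, ih]; ring
  | pred n ih =>
    push_cast at ih ⊢
    have h := hper1 (y + (-(n:ℝ) - 1))
    rw [show y + (-(n:ℝ) - 1) + 1 = y + -(n:ℝ) by ring] at h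
    linarith [h, ih]

lemma iterate_add_int {L : ℝ → ℝ} (hper1 : ∀ x, L (x + 1) = L x + 1) (n : ℕ) (k : ℤ) (y : ℝ) :
    L^[n] (y + k) = L^[n] y + k := by
  induction n with
  | zero => simp
  | succ n ih => rw [Function.iterate_succ_apply', Function.iterate_succ_apply', ih,
      map_add_int' hper1]

lemma component_exists {L : ℝ → ℝ} (hc : Continuous L)
    (hper1 : ∀ x, L (x + 1) = L x + 1)
    {s₀ : ℝ} (hs₀ : L s₀ = s₀) {x : ℝ} (hx : L x ≠ x) :
    ∃ l r : ℝ, l < x ∧ x < r ∧ L l = l ∧ L r = r ∧ ∀ t ∈ Ioo l r, L t ≠ t := by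
  have hint : ∀ k : ℤ, L (s₀ + k) = s₀ + k := fun k => by
    rw [map_add_int' hper1 k s₀, hs₀]
  have hΦcl : IsClosed {t : ℝ | L t = t} := isClosed_eq hc continuous_id
  -- the right endpoint
  have hRne : ({t : ℝ | L t = t} ∩ Ici x).Nonempty := by
    refine ⟨s₀ + (⌈x - s₀⌉ : ℝ), hint _, ?_⟩
    have := Int.le_ceil (x - s₀)
    simp only [mem_Ici]; linarith
  have hRcl : IsClosed ({t : ℝ | L t = t} ∩ Ici x) := hΦcl.inter isClosed_Ici
  have hRbdd : BddBelow ({t : ℝ | L t = t} ∩ Ici x) := ⟨x, fun t ht => ht.2⟩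
  set r := sInf ({t : ℝ | L t = t} ∩ Ici x) with hrdef
  have hrmem := hRcl.csInf_mem hRne hRbdd
  have hxr : x < r := lt_of_le_of_ne hrmem.2 fun h => hx (by rw [h]; exact hrmem.1)
  -- the left endpoint
  have hLne : ({t : ℝ | L t = t} ∩ Iic x).Nonempty := by
    refine ⟨s₀ + (⌊x - s₀⌋ : ℝ), hint _, ?_⟩
    have := Int.floor_le (x - s₀)
    simp only [mem_Iic]; linarith
  have hLcl : IsClosed ({t : ℝ | L t = t} ∩ Iic x) := hΦcl.inter isClosed_Iic
  have hLbdd : BddAbove ({t : ℝ | L t = t} ∩ Iic x) := ⟨x, fun t ht => ht.2⟩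
  set l := sSup ({t : ℝ | L t = t} ∩ Iic x) with hldef
  have hlmem := hLcl.csSup_mem hLne hLbdd
  have hlx : l < x := lt_of_le_of_ne hlmem.2 fun h => hx (by rw [← h]; exact hlmem.1)
  refine ⟨l, r, hlx, hxr, hlmem.1, hrmem.1, ?_⟩
  intro t htI hft
  rcases le_or_gt t x with h | h
  · exact absurd (le_csSup hLbdd ⟨hft, h⟩) (not_le.mpr htI.1)
  · exact absurd (csInf_le hRbdd ⟨hft, h.le⟩) (not_le.mpr htI.2)


lemma component_uniform {L Linv : ℝ → ℝ} (hc : Continuous L) (hsm : StrictMono L)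
    (hinv1 : ∀ x, Linv (L x) = x) (hinv2 : ∀ x, L (Linv x) = x)
    {l r : ℝ} (hfl : L l = l) (hfr : L r = r)
    (hnofix : ∀ t ∈ Ioo l r, L t ≠ t)
    {V : Set ℝ} (hV : IsOpen V) (hlV : l ∈ V) (hrV : r ∈ V)
    {C : Set ℝ} (hCcl : IsClosed C) (hCfix : ∀ t ∈ C, L t ≠ t) :
    ∃ N : ℕ, ∀ n ≥ N, ∀ t ∈ C ∩ Ioo l r, L^[n] t ∈ V ∧ Linv^[n] t ∈ V := by
  -- inverse map properties
  have hIsm : StrictMono Linv := fun p q hpq => hsm.lt_iff_lt.mp (by rw [hinv2, hinv2]; exact hpq)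
  have hIc : Continuous Linv :=
    Monotone.continuous_of_surjective hIsm.monotone fun y => ⟨L y, hinv1 y⟩
  have hIfl : Linv l = l := by conv_lhs => rw [← hfl, hinv1]
  have hIfr : Linv r = r := by conv_lhs => rw [← hfr, hinv1]
  rcases eq_empty_or_nonempty (C ∩ Icc l r) with hemp | hne
  · refine ⟨0, fun n _ t ht => absurd ?_ (notMem_empty t)⟩
    rw [← hemp]; exact ⟨ht.1, Ioo_subset_Icc_self ht.2⟩
  have hKcl : IsClosed (C ∩ Icc l r) := hCcl.inter isClosed_Icc
  have hKbddB : BddBelow (C ∩ Icc l r) := ⟨l, fun t ht => ht.2.1⟩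
  have hKbddA : BddAbove (C ∩ Icc l r) := ⟨r, fun t ht => ht.2.2⟩
  set m := sInf (C ∩ Icc l r) with hmdef
  set M := sSup (C ∩ Icc l r) with hMdef
  have hm := hKcl.csInf_mem hne hKbddB
  have hM := hKcl.csSup_mem hne hKbddA
  have hmIoo : m ∈ Ioo l r := by
    refine ⟨lt_of_le_of_ne hm.2.1 fun h => hCfix m hm.1 (by rw [← h]; exact hfl), 
      lt_of_le_of_ne hm.2.2 fun h => hCfix m hm.1 (by rw [h]; exact hfr)⟩
  have hMIoo : M ∈ Ioo l r := by
    refine ⟨lt_of_le_of_ne hM.2.1 fun h => hCfix M hM.1 (by rw [← h]; exact hfl),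
      lt_of_le_of_ne hM.2.2 fun h => hCfix M hM.1 (by rw [h]; exact hfr)⟩
  obtain ⟨εr, hεr, hballr⟩ := Metric.isOpen_iff.mp hV r hrV
  obtain ⟨εl, hεl, hballl⟩ := Metric.isOpen_iff.mp hV l hlV
  have hmem_le : ∀ t ∈ C ∩ Ioo l r, m ≤ t ∧ t ≤ M := by
    intro t ht
    have htK : t ∈ C ∩ Icc l r := ⟨ht.1, Ioo_subset_Icc_self ht.2⟩
    exact ⟨csInf_le hKbddB htK, le_csSup hKbddA htK⟩
  rcases sign_const hc hnofix with hup | hdown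
  · -- L moves points to the right; forward iterates → r, backward → l
    have hIdown : ∀ t ∈ Ioo l r, Linv t < t := by
      intro t htI
      by_contra h
      push_neg at h
      have h2 : L t ≤ L (Linv t) := hsm.monotone h
      rw [hinv2] at h2
      exact absurd (hup t htI) (not_lt.mpr h2)
    obtain ⟨N1, hN1⟩ := Filter.eventually_atTop.mp
      ((tendsto_iterate_of_lt hc hsm hfl hfr hup hmIoo).eventually
        (Metric.ball_mem_nhds r hεr))
    obtain ⟨N2, hN2⟩ := Filter.eventually_atTop.mp
      ((tendsto_iterate_of_gt hIc hIsm hIfl hIfr hIdown hMIoo).eventually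
        (Metric.ball_mem_nhds l hεl))
    refine ⟨max N1 N2, fun n hn t ht => ?_⟩
    obtain ⟨htm, htM⟩ := hmem_le t ht
    constructor
    · apply hballr
      have h1 : L^[n] m ≤ L^[n] t := (hsm.monotone.iterate n) htm
      have h2 : L^[n] t < r := (iter_mapsIoo hsm hfl hfr ht.2 n).2
      have h3 := hN1 n (le_trans (le_max_left _ _) hn)
      simp only [Metric.mem_ball, Real.dist_eq, abs_lt] at h3
      simp only [Metric.mem_ball, Real.dist_eq, abs_lt]
      constructor <;> linarith [h3.1, h3.2]
    · apply hballl
      have h1 : Linv^[n] t ≤ Linv^[n] M := (hIsm.monotone.iterate n) htM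
      have h2 : l < Linv^[n] t := (iter_mapsIoo hIsm hIfl hIfr ht.2 n).1
      have h3 := hN2 n (le_trans (le_max_right _ _) hn)
      simp only [Metric.mem_ball, Real.dist_eq, abs_lt] at h3
      simp only [Metric.mem_ball, Real.dist_eq, abs_lt]
      constructor <;> linarith [h3.1, h3.2]
  · -- L moves points to the left
    have hIup : ∀ t ∈ Ioo l r, t < Linv t := by
      intro t htI
      by_contra h
      push_neg at h
      have h2 : L (Linv t) ≤ L t := hsm.monotone h
      rw [hinv2] at h2
      exact absurd (hdown t htI) (not_lt.mpr h2)
    obtain ⟨N1, hN1⟩ := Filter.eventually_atTop.mp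
      ((tendsto_iterate_of_gt hc hsm hfl hfr hdown hMIoo).eventually
        (Metric.ball_mem_nhds l hεl))
    obtain ⟨N2, hN2⟩ := Filter.eventually_atTop.mp
      ((tendsto_iterate_of_lt hIc hIsm hIfl hIfr hIup hmIoo).eventually
        (Metric.ball_mem_nhds r hεr))
    refine ⟨max N1 N2, fun n hn t ht => ?_⟩
    obtain ⟨htm, htM⟩ := hmem_le t ht
    constructor
    · apply hballl
      have h1 : L^[n] t ≤ L^[n] M := (hsm.monotone.iterate n) htM
      have h2 : l < L^[n] t := (iter_mapsIoo hsm hfl hfr ht.2 n).1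
      have h3 := hN1 n (le_trans (le_max_left _ _) hn)
      simp only [Metric.mem_ball, Real.dist_eq, abs_lt] at h3
      simp only [Metric.mem_ball, Real.dist_eq, abs_lt]
      constructor <;> linarith [h3.1, h3.2]
    · apply hballr
      have h1 : Linv^[n] m ≤ Linv^[n] t := (hIsm.monotone.iterate n) htm
      have h2 : Linv^[n] t < r := (iter_mapsIoo hIsm hIfl hIfr ht.2 n).2
      have h3 := hN2 n (le_trans (le_max_right _ _) hn)
      simp only [Metric.mem_ball, Real.dist_eq, abs_lt] at h3
      simp only [Metric.mem_ball, Real.dist_eq, abs_lt]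
      constructor <;> linarith [h3.1, h3.2]

lemma real_dynamics {L Linv : ℝ → ℝ} (hc : Continuous L) (hsm : StrictMono L)
    (hper1 : ∀ x, L (x + 1) = L x + 1)
    (hinv1 : ∀ x, Linv (L x) = x) (hinv2 : ∀ x, L (Linv x) = x)
    {s₀ : ℝ} (hs₀ : L s₀ = s₀)
    {V : Set ℝ} (hV : IsOpen V) (hΦV : ∀ x, L x = x → x ∈ V)
    (hVper : ∀ x : ℝ, x ∈ V ↔ x + 1 ∈ V) :
    ∃ N : ℕ, ∀ n ≥ N, ∀ x, x ∉ V → L^[n] x ∈ V ∧ Linv^[n] x ∈ V := by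
  have hCcl : IsClosed Vᶜ := hV.isClosed_compl
  have hCfix : ∀ t ∈ Vᶜ, L t ≠ t := fun t ht h => ht (hΦV t h)
  have hKcomp : IsCompact (Vᶜ ∩ Icc s₀ (s₀ + 1)) := isCompact_Icc.inter_left hCcl
  have hVint : ∀ (k : ℤ) (x : ℝ), x ∈ V ↔ x + k ∈ V := by
    intro k
    induction k using Int.induction_on with
    | zero => simp
    | succ n ih =>
      intro x
      have h1 := ih x
      have h2 := hVper (x + n)
      rw [show ((((n:ℤ) + 1 : ℤ)) : ℝ) = (n:ℝ) + 1 by push_cast; ring,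
        show x + ((n:ℝ) + 1) = x + (n:ℝ) + 1 by ring]
      rw [show (((n:ℤ)) : ℝ) = (n:ℝ) by push_cast; ring] at h1
      rw [h1]
      exact h2
    | pred n ih =>
      intro x
      have h1 := ih x
      have h2 := hVper (x + (-(n:ℝ) - 1))
      rw [show x + (-(n:ℝ) - 1) + 1 = x + -(n:ℝ) by ring] at h2
      rw [show (((-(n:ℤ) - 1 : ℤ)) : ℝ) = x + (-(n:ℝ) - 1) - x by push_cast; ring,
        show x + (x + (-(n:ℝ) - 1) - x) = x + (-(n:ℝ) - 1) by ring]
      rw [show (((-(n:ℤ) : ℤ)) : ℝ) = -(n:ℝ) by push_cast; ring] at h1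
      rw [h1]
      exact h2.symm
  have hIper1 : ∀ x, Linv (x + 1) = Linv x + 1 := by
    intro x
    conv_lhs => rw [← hinv2 x]
    rw [← hper1 (Linv x), hinv1]
  -- per-point component data on the compact fundamental piece
  have hcover : ∀ p : (Vᶜ ∩ Icc s₀ (s₀ + 1) : Set ℝ), ∃ lr : ℝ × ℝ,
      ((p : ℝ) ∈ Ioo lr.1 lr.2) ∧
      ∃ N, ∀ n ≥ N, ∀ t ∈ Vᶜ ∩ Ioo lr.1 lr.2, L^[n] t ∈ V ∧ Linv^[n] t ∈ V := by
    rintro ⟨x, hx⟩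
    obtain ⟨l, r, h1, h2, hfl, hfr, hnofix⟩ := component_exists hc hper1 hs₀ (hCfix x hx.1)
    obtain ⟨N, hN⟩ := component_uniform hc hsm hinv1 hinv2 hfl hfr hnofix hV
      (hΦV l hfl) (hΦV r hfr) hCcl hCfix
    exact ⟨(l, r), ⟨h1, h2⟩, N, hN⟩
  choose lr hmem hNdat using hcover
  choose Nf hNf using hNdat
  have hsub : (Vᶜ ∩ Icc s₀ (s₀ + 1)) ⊆ ⋃ p, Ioo (lr p).1 (lr p).2 := fun x hx =>
    mem_iUnion.mpr ⟨⟨x, hx⟩, hmem _⟩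
  obtain ⟨t, ht⟩ := hKcomp.elim_finite_subcover _ (fun p => isOpen_Ioo) hsub
  refine ⟨t.sup Nf, fun n hn x hxV => ?_⟩
  set k := ⌊x - s₀⌋ with hkdef
  set x' := x - k with hx'def
  have hx'Icc : x' ∈ Icc s₀ (s₀ + 1) := by
    have h1 := Int.fract_nonneg (x - s₀)
    have h2 := (Int.fract_lt_one (x - s₀)).le
    rw [Int.fract] at h1 h2
    constructor <;> (simp only [hx'def, hkdef]; linarith)
  have hxx' : x = x' + k := by rw [hx'def]; ring
  have hx'V : x' ∉ V := fun h => hxV (by rw [hxx']; exact (hVint k x').mp h)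
  have hx'K : x' ∈ Vᶜ ∩ Icc s₀ (s₀ + 1) := ⟨hx'V, hx'Icc⟩
  obtain ⟨p, hp, hpIoo⟩ := mem_iUnion₂.mp (ht hx'K)
  have hres := hNf p n (le_trans (Finset.le_sup hp) hn) x' ⟨hx'V, hpIoo⟩
  constructor
  · rw [hxx', iterate_add_int hper1 n k x']
    exact (hVint k _).mp hres.1
  · rw [hxx', iterate_add_int hIper1 n k x']
    exact (hVint k _).mp hres.2


/-! ### circle basics -/

lemma coe_eq_coe_iff {x y : ℝ} : (x : S¹) = (y : S¹) ↔ ∃ k : ℤ, x = y + k := by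
  constructor
  · intro h
    rw [QuotientAddGroup.eq_iff_sub_mem] at h
    obtain ⟨k, hk⟩ := AddSubgroup.mem_zmultiples_iff.mp h
    rw [zsmul_eq_mul, mul_one] at hk
    exact ⟨k, by linarith⟩
  · rintro ⟨k, rfl⟩
    rw [QuotientAddGroup.eq_iff_sub_mem]
    exact AddSubgroup.mem_zmultiples_iff.mpr ⟨k, by rw [zsmul_eq_mul, mul_one]; ring⟩

lemma coe_surj (s : S¹) : ∃ x : ℝ, (x : S¹) = s := Quotient.exists_rep s

noncomputable instance inst_s8 : MulAction (S¹ ≃ₜ S¹) S¹ where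
  smul f x := f x
  one_smul _ := rfl
  mul_smul _ _ _ := rfl

lemma homeo_one_apply (x : S¹) : (1 : S¹ ≃ₜ S¹) x = x := rfl
lemma homeo_smul_def (f : S¹ ≃ₜ S¹) (x : S¹) : f • x = f x := rfl
lemma homeo_mul_apply (f g : S¹ ≃ₜ S¹) (x : S¹) : (f * g) x = f (g x) := rfl
lemma homeo_inv_apply (f : S¹ ≃ₜ S¹) (x : S¹) : f⁻¹ x = f.symm x := rfl

lemma homeo_continuous (f : S¹ ≃ₜ S¹) : Continuous f := f.continuous

/-! ### lift basics -/

lemma IsLift.surj {f : S¹ ≃ₜ S¹} {F : CircleDeg1Lift} (h : IsLift f F) :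
    Function.Surjective F := by
  intro y
  obtain ⟨x₀, hx₀⟩ := coe_surj (f.symm (y : S¹))
  have h1 : f ((x₀ : ℝ) : S¹) = (y : S¹) := by rw [hx₀, Homeomorph.apply_symm_apply]
  rw [h x₀] at h1
  obtain ⟨k, hk⟩ := coe_eq_coe_iff.mp h1
  exact ⟨x₀ - k, by rw [CircleDeg1Lift.map_sub_int]; linarith⟩

lemma IsLift.strictMono {f : S¹ ≃ₜ S¹} {F : CircleDeg1Lift} (h : IsLift f F) :
    StrictMono F := by
  apply F.monotone.strictMono_of_injective
  intro u v huv
  have h1 : f ((u : ℝ) : S¹) = f ((v : ℝ) : S¹) := by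
    rw [h u, h v, huv]
  have h2 := f.injective h1
  obtain ⟨k, hk⟩ := coe_eq_coe_iff.mp h2
  subst hk
  have := F.map_add_int v k
  rw [this] at huv
  have : (k : ℝ) = 0 := by linarith
  norm_cast at this
  rw [this]
  push_cast
  ring

lemma IsLift.continuous {f : S¹ ≃ₜ S¹} {F : CircleDeg1Lift} (h : IsLift f F) :
    Continuous F := F.continuous_iff_surjective.mpr h.surj

lemma IsLift.iterate {f : S¹ ≃ₜ S¹} {F : CircleDeg1Lift} (h : IsLift f F) (n : ℕ) (x : ℝ) :
    (f ^ n) ((x : ℝ) : S¹) = (((F : ℝ → ℝ)^[n] x : ℝ) : S¹) := by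
  induction n generalizing x with
  | zero => simp [homeo_one_apply]
  | succ n ih =>
    have h1 : (f ^ (n + 1)) ((x : ℝ) : S¹) = (f ^ n) (f ((x : ℝ) : S¹)) := by
      rw [pow_succ]
      rfl
    rw [h1, h x, ih (F x), Function.iterate_succ_apply]

/-! ### circle dynamics -/

lemma circle_dynamics (a : S¹ ≃ₜ S¹) (ha : OrientationPreserving a) {s₀ : S¹} (hs₀ : a s₀ = s₀)
    {U : Set S¹} (hU : IsOpen U) (hfixU : ∀ s, a s = s → s ∈ U) :
    ∃ N : ℕ, 1 ≤ N ∧ ∀ n ≥ N, ∀ s ∉ U, (a ^ n) s ∈ U ∧ ((a⁻¹) ^ n) s ∈ U := by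
  obtain ⟨A, hA⟩ := ha
  obtain ⟨z₀, hz₀⟩ := coe_surj s₀
  have hz₀' : ((A z₀ : ℝ) : S¹) = ((z₀ : ℝ) : S¹) := by
    rw [← hA z₀, hz₀, hs₀]
  obtain ⟨m₀, hm₀⟩ := coe_eq_coe_iff.mp hz₀'
  set L : ℝ → ℝ := fun x => A x - m₀ with hLdef
  have hLpush : ∀ x : ℝ, a ((x : ℝ) : S¹) = ((L x : ℝ) : S¹) := by
    intro x
    rw [hA x]
    exact coe_eq_coe_iff.mpr ⟨m₀, by simp [hLdef]⟩
  have hLc : Continuous L := (hA.continuous).sub continuous_const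
  have hLsm : StrictMono L := fun p q hpq => by
    have := hA.strictMono hpq; simp only [hLdef]; linarith
  have hLper : ∀ x, L (x + 1) = L x + 1 := fun x => by
    simp only [hLdef]; rw [A.map_add_one]; ring
  have hLs₀ : L z₀ = z₀ := by simp only [hLdef]; linarith
  have hLsurj : Function.Surjective L := fun y => by
    obtain ⟨x, hx⟩ := hA.surj (y + m₀)
    exact ⟨x, by simp only [hLdef]; rw [hx]; ring⟩
  set Linv := Function.invFun L with hLinvdef
  have hinv1 : ∀ x, Linv (L x) = x := fun x => Function.leftInverse_invFun hLsm.injective x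
  have hinv2 : ∀ x, L (Linv x) = x := fun x => Function.rightInverse_invFun hLsurj x
  set V := ((↑) : ℝ → S¹) ⁻¹' U with hVdef
  have hVopen : IsOpen V := hU.preimage continuous_quotient_mk'
  have hΦV : ∀ x, L x = x → x ∈ V := by
    intro x hx
    have : a ((x : ℝ) : S¹) = ((x : ℝ) : S¹) := by rw [hLpush x, hx]
    exact hfixU _ this
  have hVper : ∀ x : ℝ, x ∈ V ↔ x + 1 ∈ V := by
    intro x
    have : ((x + (1:ℝ) : ℝ) : S¹) = ((x : ℝ) : S¹) :=
      coe_eq_coe_iff.mpr ⟨1, by push_cast; ring⟩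
    simp only [hVdef, mem_preimage, this]
  obtain ⟨N₀, hN₀⟩ := real_dynamics hLc hLsm hLper hinv1 hinv2 hLs₀ hVopen hΦV hVper
  -- transfer of iterates
  have hfwd : ∀ (n : ℕ) (x : ℝ), (a ^ n) ((x : ℝ) : S¹) = ((L^[n] x : ℝ) : S¹) := by
    intro n
    induction n with
    | zero => intro x; simp [homeo_one_apply]
    | succ n ih =>
      intro x
      have h1 : (a ^ (n + 1)) ((x : ℝ) : S¹) = (a ^ n) (a ((x : ℝ) : S¹)) := by
        rw [pow_succ]; rfl
      rw [h1, hLpush x, ih (L x), Function.iterate_succ_apply]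
  have hbackstep : ∀ x : ℝ, a⁻¹ ((x : ℝ) : S¹) = ((Linv x : ℝ) : S¹) := by
    intro x
    have h1 : a ((Linv x : ℝ) : S¹) = ((x : ℝ) : S¹) := by
      rw [hLpush (Linv x), hinv2 x]
    calc a⁻¹ ((x : ℝ) : S¹) = a⁻¹ (a ((Linv x : ℝ) : S¹)) := by rw [h1]
    _ = ((Linv x : ℝ) : S¹) := a.symm_apply_apply _
  have hbwd : ∀ (n : ℕ) (x : ℝ), ((a⁻¹) ^ n) ((x : ℝ) : S¹) = ((Linv^[n] x : ℝ) : S¹) := by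
    intro n
    induction n with
    | zero => intro x; simp [homeo_one_apply]
    | succ n ih =>
      intro x
      have h1 : ((a⁻¹) ^ (n + 1)) ((x : ℝ) : S¹) = ((a⁻¹) ^ n) (a⁻¹ ((x : ℝ) : S¹)) := by
        rw [pow_succ]; rfl
      rw [h1, hbackstep x, ih (Linv x), Function.iterate_succ_apply]
  refine ⟨max 1 N₀, le_max_left _ _, fun n hn s hsU => ?_⟩
  obtain ⟨x, hx⟩ := coe_surj s
  have hxV : x ∉ V := fun h => hsU (by rw [← hx]; exact h)
  obtain ⟨h1, h2⟩ := hN₀ n (le_trans (le_max_right _ _) hn) x hxV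
  constructor
  · rw [← hx, hfwd n x]; exact h1
  · rw [← hx, hbwd n x]; exact h2

end Aux
section PingPong
open Metric Pointwise Cardinal

lemma freeGroup_pingpong {Γ : Type*} [Group Γ] {α : Type*} [MulAction Γ α]
    (af : Fin 2 → Γ) (X : Fin 2 → Set α)
    (hne : ∀ i, (X i).Nonempty) (hdisj : Disjoint (X 0) (X 1))
    (hpp : ∀ i j : Fin 2, i ≠ j → ∀ n : ℤ, n ≠ 0 → af i ^ n • X j ⊆ X i) :
    Function.Injective (FreeGroup.lift af) := by
  have key : FreeGroup.lift af =
      (Monoid.CoprodI.lift fun i : Fin 2 => FreeGroup.lift fun _ : Unit => af i).comp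
        (@freeGroupEquivCoprodI (Fin 2)).toMonoidHom := by
    ext i
    simp
  rw [key, MonoidHom.coe_comp]
  refine Function.Injective.comp ?_ (MulEquiv.injective freeGroupEquivCoprodI)
  refine Monoid.CoprodI.lift_injective_of_ping_pong _ ?_ X hne ?_ ?_
  · right
    refine ⟨0, le_trans ?_ (Cardinal.aleph0_le_mk (FreeGroup Unit))⟩
    exact_mod_cast (Cardinal.nat_lt_aleph0 3).le
  · intro i j hij
    fin_cases i <;> fin_cases j <;> simp_all <;>
      first
        | exact hdisj
        | exact hdisj.symm
  · intro i j hij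
    refine FreeGroup.freeGroupUnitEquivInt.forall_congr_left.mpr ?_
    intro n hne1
    change FreeGroup.lift (fun _ => af i) (FreeGroup.of () ^ n) • X j ⊆ X i
    simp only [map_zpow, FreeGroup.lift_apply_of]
    have hn0 : n ≠ 0 := by
      rintro rfl
      exact hne1 (by simp [FreeGroup.freeGroupUnitEquivInt])
    exact hpp i j hij n hn0

lemma common_fixed (G : Subgroup (S¹ ≃ₜ S¹))
    (hG : ∀ g ∈ G, OrientationPreserving g)
    (hfree : ¬ HasFreeSubgroup G) {a b : S¹ ≃ₜ S¹} (haG : a ∈ G) (hbG : b ∈ G)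
    {sa sb : S¹} (hsa : a sa = sa) (hsb : b sb = sb) :
    ∃ s, a s = s ∧ b s = s := by
  by_contra hcon
  push_neg at hcon
  have hdisjF : Disjoint {s : S¹ | a s = s} {s : S¹ | b s = s} := by
    rw [Set.disjoint_left]
    exact fun s hs1 hs2 => hcon s hs1 hs2
  have hFa_cl : IsClosed {s : S¹ | a s = s} := isClosed_eq a.continuous continuous_id
  have hFb_cl : IsClosed {s : S¹ | b s = s} := isClosed_eq b.continuous continuous_id
  obtain ⟨δ, hδ, hthick⟩ := hdisjF.exists_cthickenings hFa_cl.isCompact hFb_cl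
  set A' := cthickening δ {s : S¹ | a s = s} with hA'def
  set B' := cthickening δ {s : S¹ | b s = s} with hB'def
  obtain ⟨Na, hNa1, hNa⟩ := circle_dynamics a (hG a haG) hsa (isOpen_thickening
    (E := {s : S¹ | a s = s})) (fun s hs => self_subset_thickening hδ _ hs)
  obtain ⟨Nb, hNb1, hNb⟩ := circle_dynamics b (hG b hbG) hsb (isOpen_thickening
    (E := {s : S¹ | b s = s})) (fun s hs => self_subset_thickening hδ _ hs)
  set N := max Na Nb with hNdef
  have hxpow : ∀ m : ℕ, N ≤ m → ∀ s ∈ B', (a ^ m) s ∈ A' ∧ ((a⁻¹) ^ m) s ∈ A' := by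
    intro m hm' s hs
    have hm : Na ≤ m := le_trans (le_max_left _ _) hm'
    have hsU : s ∉ thickening δ {s : S¹ | a s = s} := fun h =>
      Set.disjoint_left.mp hthick (thickening_subset_cthickening δ _ h) hs
    obtain ⟨h1, h2⟩ := hNa m hm s hsU
    exact ⟨thickening_subset_cthickening δ _ h1, thickening_subset_cthickening δ _ h2⟩
  have hypow : ∀ m : ℕ, N ≤ m → ∀ s ∈ A', (b ^ m) s ∈ B' ∧ ((b⁻¹) ^ m) s ∈ B' := by
    intro m hm' s hs
    have hm : Nb ≤ m := le_trans (le_max_right _ _) hm'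
    have hsU : s ∉ thickening δ {s : S¹ | b s = s} := fun h =>
      Set.disjoint_right.mp hthick (thickening_subset_cthickening δ _ h) hs
    obtain ⟨h1, h2⟩ := hNb m hm s hsU
    exact ⟨thickening_subset_cthickening δ _ h1, thickening_subset_cthickening δ _ h2⟩
  set x := a ^ N with hxdef
  set y := b ^ N with hydef
  set af : Fin 2 → (S¹ ≃ₜ S¹) := fun i => if i = 0 then x else y with hafdef
  set Xs : Fin 2 → Set S¹ := fun i => if i = 0 then A' else B' with hXsdef
  have hA'ne : A'.Nonempty := ⟨sa, self_subset_cthickening _ hsa⟩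
  have hB'ne : B'.Nonempty := ⟨sb, self_subset_cthickening _ hsb⟩
  -- the two ping-pong estimates
  have hXpp : ∀ (c : S¹ ≃ₜ S¹) (S T : Set S¹),
      (∀ m : ℕ, N ≤ m → ∀ s ∈ S, (c ^ m) s ∈ T ∧ ((c⁻¹) ^ m) s ∈ T) →
      ∀ n : ℤ, n ≠ 0 → (c ^ N) ^ n • S ⊆ T := by
    intro c S T hpow n hn u hu
    obtain ⟨s, hs, rfl⟩ := Set.mem_smul_set.mp hu
    have hN1 : 1 ≤ N := le_trans hNa1 (le_max_left _ _)
    rcases lt_or_gt_of_ne hn with hneg | hpos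
    · set m := (-n).toNat with hmdef
      have hm1 : 1 ≤ m := by omega
      have hmn : n = -(m : ℤ) := by omega
      have heq : (c ^ N) ^ n = ((c⁻¹) ^ (N * m) : _) := by
        rw [hmn, zpow_neg, zpow_natCast, ← pow_mul, ← inv_pow]
      rw [heq]
      exact (hpow (N * m) (Nat.le_mul_of_pos_right N (by omega)) s hs).2
    · set m := n.toNat with hmdef
      have hm1 : 1 ≤ m := by omega
      have hmn : n = (m : ℤ) := by omega
      have heq : (c ^ N) ^ n = c ^ (N * m) := by
        rw [hmn, zpow_natCast, ← pow_mul]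
      rw [heq]
      exact (hpow (N * m) (Nat.le_mul_of_pos_right N (by omega)) s hs).1
  have hinj : Function.Injective (FreeGroup.lift af) := by
    apply freeGroup_pingpong af Xs
    · intro i
      fin_cases i <;> simp [hXsdef, hA'ne, hB'ne]
    · simpa [hXsdef] using hthick
    · intro i j hij n hn
      fin_cases i <;> fin_cases j
      · exact absurd rfl hij
      · simp only [hafdef, hXsdef]
        norm_num
        exact hXpp a B' A' hxpow n hn
      · simp only [hafdef, hXsdef]
        norm_num
        exact hXpp b A' B' hypow n hn
      · exact absurd rfl hij
  have hxG : x ∈ G := pow_mem haG N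
  have hyG : y ∈ G := pow_mem hbG N
  have hafG : ∀ i, af i ∈ G := by
    intro i
    fin_cases i <;> simp only [hafdef] <;> norm_num
    · exact hxG
    · exact hyG
  set φ' : FreeGroup (Fin 2) →* G := FreeGroup.lift (fun i => (⟨af i, hafG i⟩ : G)) with hφ'def
  have hcomp : G.subtype.comp φ' = FreeGroup.lift af := by
    ext i
    simp [hφ'def]
  refine hfree ⟨FreeGroup.lift af, hinj, fun w => ?_⟩
  rw [← hcomp]
  exact (φ' w).2

end PingPong


/-- In a group without non-abelian free subgroups, two elements with the same rational rotation
number differ by an element with a fixed point. -/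
theorem stmt8 (G : Subgroup (S¹ ≃ₜ S¹)) (hG : ∀ g ∈ G, OrientationPreserving g)
    (hfree : ¬ HasFreeSubgroup G) (f g : S¹ ≃ₜ S¹) (hf : f ∈ G) (hg : g ∈ G)
    (r : ℚ) (hrf : rot f = ((r : ℝ) : S¹)) (hrg : rot g = ((r : ℝ) : S¹)) :
    (FixSet (f * g⁻¹)).Nonempty := by
  classical
  have hOPf := hG f hf
  have hOPg := hG g hg
  have hrotf : rot f = ((hOPf.choose.translationNumber : ℝ) : S¹) := by
    rw [rot, dif_pos hOPf]
  have hrotg : rot g = ((hOPg.choose.translationNumber : ℝ) : S¹) := by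
    rw [rot, dif_pos hOPg]
  set F := hOPf.choose with hFdef
  set Gl := hOPg.choose with hGldef
  have hF : IsLift f F := hOPf.choose_spec
  have hGl : IsLift g Gl := hOPg.choose_spec
  have hFc : Continuous F := hF.continuous
  have hGlc : Continuous Gl := hGl.continuous
  obtain ⟨z₁, hz₁⟩ := coe_eq_coe_iff.mp (hrotf.symm.trans hrf)
  obtain ⟨z₂, hz₂⟩ := coe_eq_coe_iff.mp (hrotg.symm.trans hrg)
  set q := r.den with hqdef
  have hq : 0 < q := r.pos
  have hqR : ((q : ℕ) : ℝ) ≠ 0 := Nat.cast_ne_zero.mpr hq.ne'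
  -- Poincaré: fixed points of f ^ q and g ^ q
  have hτF : F.translationNumber = ((r.num + z₁ * q : ℤ) : ℝ) / (q : ℕ) := by
    rw [hz₁, Rat.cast_def]
    push_cast
    field_simp
    rw [hqdef]; ring
  obtain ⟨ξf, hξf⟩ := (F.translationNumber_eq_rat_iff hFc hq).mp hτF
  have hξf' : (F : ℝ → ℝ)^[q] ξf = ξf + ((r.num + z₁ * q : ℤ) : ℝ) := by
    rw [← CircleDeg1Lift.coe_pow]; exact hξf
  have hfixf : (f ^ q) ((ξf : ℝ) : S¹) = ((ξf : ℝ) : S¹) := by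
    rw [hF.iterate q ξf, hξf']
    exact coe_eq_coe_iff.mpr ⟨r.num + z₁ * q, rfl⟩
  have hτGl : Gl.translationNumber = ((r.num + z₂ * q : ℤ) : ℝ) / (q : ℕ) := by
    rw [hz₂, Rat.cast_def]
    push_cast
    field_simp
    rw [hqdef]; ring
  obtain ⟨ξg, hξg⟩ := (Gl.translationNumber_eq_rat_iff hGlc hq).mp hτGl
  have hξg' : (Gl : ℝ → ℝ)^[q] ξg = ξg + ((r.num + z₂ * q : ℤ) : ℝ) := by
    rw [← CircleDeg1Lift.coe_pow]; exact hξg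
  have hfixg : (g ^ q) ((ξg : ℝ) : S¹) = ((ξg : ℝ) : S¹) := by
    rw [hGl.iterate q ξg, hξg']
    exact coe_eq_coe_iff.mpr ⟨r.num + z₂ * q, rfl⟩
  -- common fixed point
  obtain ⟨s, hsf, hsg⟩ := common_fixed G hG hfree (pow_mem hf q) (pow_mem hg q) hfixf hfixg
  obtain ⟨sh, hsh⟩ := coe_surj s
  have h1 : (((F : ℝ → ℝ)^[q] sh : ℝ) : S¹) = ((sh : ℝ) : S¹) := by
    rw [← hF.iterate q sh, hsh, hsf]
  have h2 : (((Gl : ℝ → ℝ)^[q] sh : ℝ) : S¹) = ((sh : ℝ) : S¹) := by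
    rw [← hGl.iterate q sh, hsh, hsg]
  obtain ⟨m₁, hm₁⟩ := coe_eq_coe_iff.mp h1
  obtain ⟨m₂, hm₂⟩ := coe_eq_coe_iff.mp h2
  have hτF2 : F.translationNumber = (m₁ : ℝ) / (q : ℕ) :=
    F.translationNumber_of_map_pow_eq_add_int
      (by rw [CircleDeg1Lift.coe_pow]; exact hm₁) hq
  have hτGl2 : Gl.translationNumber = (m₂ : ℝ) / (q : ℕ) :=
    Gl.translationNumber_of_map_pow_eq_add_int
      (by rw [CircleDeg1Lift.coe_pow]; exact hm₂) hq
  set k := z₁ - z₂ with hkdef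
  have hkey : (m₁ : ℝ) = m₂ + (k : ℤ) * q := by
    have e1 : (m₁ : ℝ) / (q : ℕ) = (r : ℝ) + z₁ := by rw [← hτF2]; exact hz₁
    have e2 : (m₂ : ℝ) / (q : ℕ) = (r : ℝ) + z₂ := by rw [← hτGl2]; exact hz₂
    have e1' : (m₁ : ℝ) = ((r : ℝ) + z₁) * q := by
      field_simp at e1; linarith
    have e2' : (m₂ : ℝ) = ((r : ℝ) + z₂) * q := by
      field_simp at e2; linarith
    rw [e1', e2', hkdef]
    push_cast
    ring
  -- suppose f * g⁻¹ has no fixed point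
  by_contra hcon
  rw [Set.not_nonempty_iff_eq_empty] at hcon
  have hno : ∀ t : S¹, f t ≠ g t := by
    intro t h
    have hmem : g t ∈ FixSet (f * g⁻¹) := by
      show (f * g⁻¹) (g t) = g t
      have ha : (f * g⁻¹) (g t) = f (g⁻¹ (g t)) := rfl
      rw [ha, show g⁻¹ (g t) = t from g.symm_apply_apply t, h]
    rw [hcon] at hmem
    exact hmem
  set B : ℝ → ℝ := fun x' => Gl x' + (k : ℤ) with hBdef
  have hDne : ∀ x : ℝ, F x ≠ B x := by
    intro x h
    apply hno ((x : ℝ) : S¹)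
    rw [hF x, hGl x, show (F x : ℝ) = Gl x + (k:ℤ) from h]
    exact coe_eq_coe_iff.mpr ⟨k, rfl⟩
  have hDc : Continuous fun x => F x - B x := hFc.sub (hGlc.add continuous_const)
  have hsign : (∀ x : ℝ, B x < F x) ∨ (∀ x : ℝ, F x < B x) := by
    by_contra hcc
    push_neg at hcc
    obtain ⟨⟨x1, hx1⟩, ⟨x2, hx2⟩⟩ := hcc
    have hmem0 : (0:ℝ) ∈ Icc (F x1 - B x1) (F x2 - B x2) := ⟨by linarith, by linarith⟩
    obtain ⟨u, hu⟩ := intermediate_value_univ x1 x2 hDc hmem0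
    exact hDne u (by dsimp at hu; linarith)
  have hBiter : ∀ (n : ℕ) (x : ℝ), B^[n] x = (Gl : ℝ → ℝ)^[n] x + (n : ℝ) * (k : ℤ) := by
    intro n
    induction n with
    | zero => intro x; simp
    | succ n ih =>
      intro x
      rw [Function.iterate_succ_apply', Function.iterate_succ_apply', ih]
      simp only [hBdef]
      rw [show ((n : ℝ)) * ((k:ℤ) : ℝ) = (((n : ℤ) * k : ℤ) : ℝ) by push_cast; ring,
        Gl.map_add_int]
      push_cast
      ring
  have iterate_lt : ∀ (P Q : ℝ → ℝ), (∀ x', P x' < Q x') → Monotone Q →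
      ∀ (x' : ℝ) (n : ℕ), 1 ≤ n → P^[n] x' < Q^[n] x' := by
    intro P Q hPQ hQ x' n
    induction n with
    | zero => intro h; exact absurd h (by norm_num)
    | succ n ih =>
      intro _
      rcases Nat.eq_zero_or_pos n with rfl | hn
      · simpa using hPQ x'
      · rw [Function.iterate_succ_apply', Function.iterate_succ_apply']
        calc P (P^[n] x') < Q (P^[n] x') := hPQ _
          _ ≤ Q (Q^[n] x') := hQ (ih hn).le
  have hBq : B^[q] sh = sh + (m₁ : ℝ) := by
    rw [hBiter q sh, hm₂]
    rw [hkey]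
    push_cast
    ring
  have hBmono : Monotone B := fun p p' hpp' => by
    simp only [hBdef]
    have := Gl.monotone hpp'
    linarith
  rcases hsign with hlt | hlt
  · have := iterate_lt B F hlt F.monotone sh q hq
    rw [hBq, hm₁] at this
    exact lt_irrefl _ this
  · have := iterate_lt F B hlt hBmono sh q hq
    rw [hBq, hm₁] at this
    exact lt_irrefl _ this
end
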